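/- arXiv:math/0209279 — 5 statements merged into one kernel-verified Lean document; each statement's English description precedes it below -/
import Mathlib

section
/- If Q is a finite power-associative CC-loop and the order |Q| is relatively prime to a positive natural number n, then every element of Q is an n-th power: for every y ∈ Q there exists x ∈ Q with xⁿ = y. -/
/-- A loop: a type with multiplication, identity, and two-sided division. -/
class Loop (Q : Type*) extends Mul Q, One Q where
  ld : Q → Q → Q  -- left division: `ld x y = x \ y`
  rd : Q → Q → Q  -- right division: `rd x y = x / y`
  one_mul : ∀ x : Q, 1 * x = x
  mul_one : ∀ x : Q, x * 1 = x
  mul_ld : ∀ x y : Q, x * ld x y = y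
  ld_mul : ∀ x y : Q, ld x (x * y) = y
  rd_mul : ∀ x y : Q, rd x y * y = x
  mul_rd : ∀ x y : Q, rd (x * y) y = x

namespace Loop

variable {Q : Type*} [Loop Q]

/-- A conjugacy closed loop (CC-loop). -/
def IsCC (Q : Type*) [Loop Q] : Prop :=
  (∀ x y z : Q, x * (y * z) = rd (x * y) x * (x * z)) ∧
  (∀ x y z : Q, (z * y) * x = (z * x) * ld x (y * x))

/-- The nucleus `N(Q)`. -/
def nucleus (Q : Type*) [Loop Q] : Set Q :=
  {a | (∀ x y : Q, a * (x * y) = (a * x) * y) ∧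
       (∀ x y : Q, x * (a * y) = (x * a) * y) ∧
       (∀ x y : Q, x * (y * a) = (x * y) * a)}

/-- A subloop: contains 1 and is closed under `·`, `\`, `/`. -/
def IsSubloop (S : Set Q) : Prop :=
  (1 : Q) ∈ S ∧ (∀ a ∈ S, ∀ b ∈ S, a * b ∈ S) ∧
  (∀ a ∈ S, ∀ b ∈ S, ld a b ∈ S) ∧ (∀ a ∈ S, ∀ b ∈ S, rd a b ∈ S)

/-- The subloop generated by a set `S`. -/
def closure (S : Set Q) : Set Q := ⋂₀ {T : Set Q | IsSubloop T ∧ S ⊆ T}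

/-- An element is power-associative if the subloop it generates is associative. -/
def IsPA (a : Q) : Prop :=
  ∀ x ∈ closure {a}, ∀ y ∈ closure {a}, ∀ z ∈ closure {a}, x * (y * z) = (x * y) * z

/-- Powers: `pow a 0 = 1`, `pow a (n+1) = a * pow a n`. -/
def pow (a : Q) : ℕ → Q
  | 0 => 1
  | n + 1 => a * pow a n

/-- A WIP (weak inverse property) element. -/
def IsWIP (c : Q) : Prop := ∀ x : Q, c * ld (x * c) 1 = ld x 1

end Loop

open Loop

-- AUX START
namespace LoopAux

variable {Q : Type*} [Loop Q]

lemma lcancel {a b c : Q} (h : a * b = a * c) : b = c := by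
  have := congrArg (Loop.ld a) h
  rwa [Loop.ld_mul, Loop.ld_mul] at this

lemma rcancel {a b c : Q} (h : b * a = c * a) : b = c := by
  have := congrArg (fun t => Loop.rd t a) h
  simpa [Loop.mul_rd] using this

lemma closure_isSubloop (S : Set Q) : IsSubloop (closure S) := by
  refine ⟨?_, ?_, ?_, ?_⟩
  · intro T hT; exact hT.1.1
  · intro a ha b hb T hT
    exact hT.1.2.1 a (ha T hT) b (hb T hT)
  · intro a ha b hb T hT
    exact hT.1.2.2.1 a (ha T hT) b (hb T hT)
  · intro a ha b hb T hT
    exact hT.1.2.2.2 a (ha T hT) b (hb T hT)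

lemma subset_closure (S : Set Q) : S ⊆ closure S := fun a ha T hT => hT.2 ha

lemma mem_closure_self (a : Q) : a ∈ closure {a} := subset_closure {a} rfl

lemma pow_mem (a : Q) : ∀ i, pow a i ∈ closure {a}
  | 0 => (closure_isSubloop {a}).1
  | i + 1 => (closure_isSubloop {a}).2.1 a (mem_closure_self a) _ (pow_mem a i)

lemma pow_add {a : Q} (h : IsPA a) (i j : ℕ) :
    pow a (i + j) = pow a i * pow a j := by
  induction i with
  | zero => simp [pow, Loop.one_mul]
  | succ i ih =>
      have : i + 1 + j = (i + j) + 1 := by omega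
      rw [this]
      show a * pow a (i + j) = (a * pow a i) * pow a j
      rw [ih]
      exact h a (mem_closure_self a) _ (pow_mem a i) _ (pow_mem a j)

lemma pow_one' (a : Q) : pow a 1 = a := Loop.mul_one a

lemma pow_succ_right {a : Q} (h : IsPA a) (i : ℕ) :
    pow a (i + 1) = pow a i * a := by
  rw [pow_add h i 1, pow_one']

lemma pow_pow {a : Q} (h : IsPA a) (i j : ℕ) :
    pow (pow a i) j = pow a (i * j) := by
  induction j with
  | zero => simp [pow]
  | succ j ih =>
      show pow a i * pow (pow a i) j = _
      rw [ih, ← pow_add h, Nat.mul_succ]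
      ring_nf

lemma one_pow' (n : ℕ) : pow (1 : Q) n = 1 := by
  induction n with
  | zero => rfl
  | succ n ih => show (1 : Q) * pow 1 n = 1; rw [ih, Loop.one_mul]

/-- Left translation as a permutation. -/
def LP (a : Q) : Equiv.Perm Q where
  toFun := (a * ·)
  invFun := (Loop.ld a ·)
  left_inv := fun b => Loop.ld_mul a b
  right_inv := fun b => Loop.mul_ld a b

/-- Right translation as a permutation. -/
def RP (a : Q) : Equiv.Perm Q where
  toFun := (· * a)
  invFun := (Loop.rd · a)
  left_inv := fun b => Loop.mul_rd b a
  right_inv := fun b => Loop.rd_mul b a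

@[simp] lemma LP_apply (a b : Q) : LP a b = a * b := rfl
@[simp] lemma RP_apply (a b : Q) : RP a b = b * a := rfl
@[simp] lemma LP_inv_apply (a b : Q) : (LP a)⁻¹ b = Loop.ld a b := rfl
@[simp] lemma RP_inv_apply (a b : Q) : (RP a)⁻¹ b = Loop.rd b a := rfl

lemma LP_one : LP (1 : Q) = 1 := Equiv.ext fun a => Loop.one_mul a
lemma RP_one : RP (1 : Q) = 1 := Equiv.ext fun a => Loop.mul_one a

/-- Key divisibility: if `x ≠ 1` and `x^p = 1` with `p` prime, then `p ∣ |Q|`. -/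
lemma prime_dvd_card {Q : Type*} [Loop Q] [Finite Q] (hcc : IsCC Q)
    (hpa : ∀ a : Q, IsPA a) {p : ℕ} (hp : p.Prime) {x : Q}
    (hx1 : x ≠ 1) (hxp : pow x p = 1) : p ∣ Nat.card Q := by
  classical
  set l : Equiv.Perm Q := LP x with hl
  set r : Equiv.Perm Q := RP x with hr
  -- recursion for left translations of powers
  have h_k : ∀ i : ℕ, LP (pow x (i + 1)) = r * LP (pow x i) * r⁻¹ * l := by
    intro i
    ext a
    show pow x (i + 1) * a = (pow x i * Loop.rd (x * a) x) * x
    symm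
    calc (pow x i * Loop.rd (x * a) x) * x
        = (pow x i * x) * Loop.ld x (Loop.rd (x * a) x * x) := hcc.2 x _ _
      _ = (pow x i * x) * Loop.ld x (x * a) := by rw [Loop.rd_mul]
      _ = (pow x i * x) * a := by rw [Loop.ld_mul]
      _ = pow x (i + 1) * a := by rw [← pow_succ_right (hpa x)]
  have h_q : ∀ i : ℕ, RP (pow x (i + 1)) = l * RP (pow x i) * l⁻¹ * r := by
    intro i
    ext a
    show a * pow x (i + 1) = x * (Loop.ld x (a * x) * pow x i)
    symm
    calc x * (Loop.ld x (a * x) * pow x i)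
        = Loop.rd (x * Loop.ld x (a * x)) x * (x * pow x i) := hcc.1 x _ _
      _ = Loop.rd (a * x) x * (x * pow x i) := by rw [Loop.mul_ld]
      _ = a * (x * pow x i) := by rw [Loop.mul_rd]
      _ = a * pow x (i + 1) := rfl
  have h_c : ∀ i : ℕ, Commute (LP (pow x i)) l := by
    intro i
    apply Equiv.ext
    intro a
    show pow x i * (x * a) = x * (pow x i * a)
    symm
    calc x * (pow x i * a)
        = Loop.rd (x * pow x i) x * (x * a) := hcc.1 x _ _
      _ = Loop.rd (pow x i * x) x * (x * a) := by
          rw [show x * pow x i = pow x i * x from by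
            rw [← pow_succ_right (hpa x)]; rfl]
      _ = pow x i * (x * a) := by rw [Loop.mul_rd]
  have tele_l : ∀ i : ℕ, LP (pow x i) = r ^ i * (r⁻¹ * l) ^ i := by
    intro i
    induction i with
    | zero => simpa [pow] using LP_one
    | succ i ih =>
        rw [h_k i, ih, pow_succ, pow_succ]
        group
  have tele_r : ∀ i : ℕ, RP (pow x i) = l ^ i * (l⁻¹ * r) ^ i := by
    intro i
    induction i with
    | zero => simpa [pow] using RP_one
    | succ i ih =>
        rw [h_q i, ih, pow_succ, pow_succ]
        group
  have hl1 : (1 : Equiv.Perm Q) = r ^ p * (r⁻¹ * l) ^ p := by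
    rw [← tele_l p, hxp, LP_one]
  have hr1 : (1 : Equiv.Perm Q) = l ^ p * (l⁻¹ * r) ^ p := by
    rw [← tele_r p, hxp, RP_one]
  have hrl : (r⁻¹ * l) ^ p = (r ^ p)⁻¹ := by
    have h2 : r ^ p * (r⁻¹ * l) ^ p = 1 := hl1.symm
    rw [mul_eq_one_iff_inv_eq] at h2
    exact h2.symm
  have hlr : (l⁻¹ * r) ^ p = (l ^ p)⁻¹ := by
    have h2 : l ^ p * (l⁻¹ * r) ^ p = 1 := hr1.symm
    rw [mul_eq_one_iff_inv_eq] at h2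
    exact h2.symm
  have hs : l ^ p = (r ^ p)⁻¹ := by
    rw [← hrl]
    have h3 : (r⁻¹ * l) = (l⁻¹ * r)⁻¹ := by group
    rw [h3, inv_pow, hlr, inv_inv]
  -- (LP (pow x j))^p = (l^p)^j by induction
  have hsr : Commute (l ^ p) r := by
    rw [hs]
    exact ((Commute.refl r).pow_left p).inv_left
  have hj : ∀ j : ℕ, (LP (pow x j)) ^ p = (l ^ p) ^ j := by
    intro j
    induction j with
    | zero => simp [pow, LP_one]
    | succ j ih =>
        have hA : LP (pow x (j + 1)) = (r * LP (pow x j) * r⁻¹) * l := by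
          rw [h_k j]
        have hAc : Commute (r * LP (pow x j) * r⁻¹) l := by
          have h1 : r * LP (pow x j) * r⁻¹ = LP (pow x (j + 1)) * l⁻¹ := by
            rw [hA]; group
          rw [h1]
          exact (h_c (j + 1)).mul_left ((Commute.refl l).inv_left)
        calc (LP (pow x (j + 1))) ^ p
            = ((r * LP (pow x j) * r⁻¹) * l) ^ p := by rw [hA]
          _ = (r * LP (pow x j) * r⁻¹) ^ p * l ^ p := hAc.mul_pow p
          _ = (r * (LP (pow x j)) ^ p * r⁻¹) * l ^ p := by rw [conj_pow]
          _ = (r * (l ^ p) ^ j * r⁻¹) * l ^ p := by rw [ih]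
          _ = ((l ^ p) ^ j) * l ^ p := by
              rw [(hsr.symm.pow_right j).eq]; group
          _ = (l ^ p) ^ (j + 1) := by rw [pow_succ]
  have hfin : l ^ (p * p) = 1 := by
    have h4 := hj p
    rw [hxp, LP_one, one_pow] at h4
    rw [_root_.pow_mul]
    exact h4.symm
  -- action of ZMod (p*p) via l
  have hpp : 1 < p * p := by nlinarith [hp.one_lt]
  haveI : NeZero (p * p) := ⟨by positivity⟩
  have hper : ∀ m : ℕ, l ^ (m % (p * p)) = l ^ m := by
    intro m
    conv_rhs => rw [← Nat.mod_add_div m (p * p)]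
    rw [_root_.pow_add, Nat.mul_comm, _root_.pow_mul, hfin, one_pow, _root_.mul_one]
  letI act : MulAction (Multiplicative (ZMod (p * p))) Q :=
    { smul := fun g a => (l ^ (Multiplicative.toAdd g).val) a
      one_smul := fun a => by
        show (l ^ (0 : ZMod (p * p)).val) a = a
        rw [ZMod.val_zero, pow_zero]; rfl
      mul_smul := fun g h a => by
        show (l ^ ((Multiplicative.toAdd g) + (Multiplicative.toAdd h)).val) a
            = (l ^ (Multiplicative.toAdd g).val) ((l ^ (Multiplicative.toAdd h).val) a)
        rw [ZMod.val_add, hper, _root_.pow_add]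
        rfl }
  haveI : Fact p.Prime := ⟨hp⟩
  haveI : Fact (1 < p * p) := ⟨hpp⟩
  haveI hPG : IsPGroup p (Multiplicative (ZMod (p * p))) := by
    apply IsPGroup.of_card (n := 2)
    rw [Nat.card_eq_fintype_card, Fintype.card_multiplicative, ZMod.card]
    ring
  have hmod := hPG.card_modEq_card_fixedPoints Q
  have hempty : IsEmpty (MulAction.fixedPoints (Multiplicative (ZMod (p * p))) Q) := by
    constructor
    rintro ⟨a, ha⟩
    have h1 := ha (Multiplicative.ofAdd (1 : ZMod (p * p)))
    have hval : ((1 : ZMod (p * p))).val = 1 := ZMod.val_one (p * p)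
    have : (l ^ (1 : ZMod (p * p)).val) a = a := h1
    rw [hval, pow_one] at this
    have hxa : x * a = a := this
    apply hx1
    have : x * a = 1 * a := by rw [Loop.one_mul]; exact hxa
    exact rcancel this
  have hfix : Nat.card (MulAction.fixedPoints (Multiplicative (ZMod (p * p))) Q) = 0 :=
    Nat.card_of_isEmpty
  rw [hfix] at hmod
  exact (Nat.modEq_zero_iff_dvd).mp hmod

end LoopAux

lemma exists_period {Q : Type*} [Loop Q] [Finite Q] (hpa : ∀ a : Q, IsPA a) (y : Q) :
    ∃ k, 0 < k ∧ pow y k = 1 := by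
  obtain ⟨i, j, hne, heq⟩ := Finite.exists_ne_map_eq_of_infinite (fun i : ℕ => pow y i)
  wlog hij : i < j generalizing i j
  · exact this j i hne.symm heq.symm (by omega)
  refine ⟨j - i, by omega, ?_⟩
  have h1 : pow y j = pow y i * pow y (j - i) := by
    rw [← LoopAux.pow_add (hpa y)]; congr 1; omega
  have h2 : pow y i * 1 = pow y i * pow y (j - i) := by
    rw [Loop.mul_one]; exact heq.trans h1
  exact (LoopAux.lcancel h2).symm

theorem stmt_2' {Q : Type*} [Loop Q] [Finite Q] (hcc : IsCC Q)
    (hpa : ∀ a : Q, IsPA a) (n : ℕ) (hn : 0 < n)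
    (hcop : Nat.Coprime (Nat.card Q) n) :
    ∀ y : Q, ∃ x : Q, pow x n = y := by
  intro y
  have hex := exists_period hpa y
  classical
  set d := Nat.find hex with hd
  obtain ⟨hdpos, hdone⟩ : 0 < d ∧ pow y d = 1 := Nat.find_spec hex
  -- d is coprime to n
  have hcopd : Nat.Coprime n d := by
    rw [Nat.coprime_comm]
    by_contra hnot
    obtain ⟨p, hp, hpd⟩ := Nat.exists_prime_and_dvd hnot
    have hpdd : p ∣ d := hpd.trans (Nat.gcd_dvd_left d n)
    have hpn : p ∣ n := hpd.trans (Nat.gcd_dvd_right d n)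
    set z := pow y (d / p) with hz
    have hzp : pow z p = 1 := by
      rw [hz, LoopAux.pow_pow (hpa y), Nat.div_mul_cancel hpdd, hdone]
    have hdp_lt : d / p < d := Nat.div_lt_self hdpos hp.one_lt
    have hdp_pos : 0 < d / p := Nat.div_pos (Nat.le_of_dvd hdpos hpdd) hp.pos
    have hz1 : z ≠ 1 := by
      intro h
      exact Nat.find_min hex hdp_lt ⟨hdp_pos, h⟩
    have hdvd : p ∣ Nat.card Q := LoopAux.prime_dvd_card hcc hpa hp hz1 hzp
    have : p ∣ 1 := hcop ▸ Nat.dvd_gcd hdvd hpn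
    exact hp.ne_one (Nat.eq_one_of_dvd_one this)
  rcases eq_or_lt_of_le (Nat.one_le_iff_ne_zero.mpr hdpos.ne') with h1 | hd1
  · -- d = 1, so y = 1
    have hy1 : y = 1 := by
      have : pow y 1 = 1 := by rw [← h1] at hdone; exact hdone
      rwa [LoopAux.pow_one'] at this
    exact ⟨1, by rw [LoopAux.one_pow', hy1]⟩
  · obtain ⟨k, -, hk⟩ := Nat.exists_mul_mod_eq_one_of_coprime hcopd hd1
    refine ⟨pow y k, ?_⟩
    rw [LoopAux.pow_pow (hpa y)]
    have h6 : k * n % d = 1 := by rw [Nat.mul_comm]; exact hk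
    have h5 := Nat.div_add_mod (k * n) d
    rw [h6] at h5
    rw [← h5, Nat.add_comm, LoopAux.pow_add (hpa y), ← LoopAux.pow_pow (hpa y), hdone,
      LoopAux.one_pow', Loop.mul_one, LoopAux.pow_one']



/-- In a finite power-associative CC-loop of order coprime to `n`,
every element is an `n`-th power. -/
theorem stmt_2 {Q : Type*} [Loop Q] [Finite Q] (hcc : IsCC Q)
    (hpa : ∀ a : Q, IsPA a) (n : ℕ) (hn : 0 < n)
    (hcop : Nat.Coprime (Nat.card Q) n) :
    ∀ y : Q, ∃ x : Q, pow x n = y :=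
  stmt_2' hcc hpa n hn hcop
end

section
/- If Q is a finite power-associative CC-loop and p is a prime dividing the order |Q|, then Q contains an element of order p; in particular there exists x ∈ Q with x ≠ 1 and x^p = 1. -/
open Loop

/-!
In a CC-loop `Q` the nucleus `N` is a normal subgroup and every associator lies in `N`: for
`z = (x * y) * w` the bijection `g = L_z⁻¹ L_x L_y L_{xy}⁻¹ L_z` conjugates left translations to
left translations, and the CC laws rewrite it as a product of right translations and their
inverses, so it also conjugates right translations to right translations; any such bijection sends
`1` into `N`, and `g 1 = z \ (x * (y * w))`. Hence `Q / N` is a group and `|Q| = |Q / N| * |N|`.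
If `p` divides `|N|`, Cauchy's theorem in `N` gives the element. If `p` divides `|Q / N|`, lift an
element of order `p` to `a ∈ Q`; by power-associativity `a` has a least period `m`, which is a
multiple `p * c` of `p`, and `a ^ c` has order `p`.
-/

namespace Loop

variable {Q : Type*} [Loop Q]

theorem mul_left_cancel {a b c : Q} (h : a * b = a * c) : b = c := by
  rw [← ld_mul a b, h, ld_mul]

theorem mul_right_cancel {a b c : Q} (h : b * a = c * a) : b = c := by
  rw [← mul_rd b a, h, mul_rd]

theorem ld_eq_of_mul_eq {a b c : Q} (h : a * b = c) : ld a c = b := by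
  rw [← h, ld_mul]

theorem mul_left_surjective (a : Q) : Function.Surjective (a * ·) :=
  fun t => ⟨ld a t, mul_ld a t⟩

theorem ld_surjective (a : Q) : Function.Surjective (ld a) :=
  fun t => ⟨a * t, ld_mul a t⟩

section Nucleus

theorem one_mem_nucleus : (1 : Q) ∈ nucleus Q :=
  ⟨fun x y => by rw [one_mul, one_mul],
   fun x y => by rw [one_mul, mul_one],
   fun x y => by rw [mul_one, mul_one]⟩

theorem mul_mem_nucleus {a b : Q} (ha : a ∈ nucleus Q) (hb : b ∈ nucleus Q) :
    a * b ∈ nucleus Q := by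
  obtain ⟨ha₁, ha₂, ha₃⟩ := ha
  obtain ⟨hb₁, hb₂, hb₃⟩ := hb
  refine ⟨fun x y => ?_, fun x y => ?_, fun x y => ?_⟩
  · rw [← ha₁, hb₁, ha₁, ha₁]
  · rw [← ha₁, ha₂, hb₂, ha₂]
  · rw [ha₂ y b, hb₃, ha₃, ← ha₂]

theorem ld_one_mul_of_mem_nucleus {a : Q} (ha : a ∈ nucleus Q) : ld a 1 * a = 1 :=
  mul_left_cancel (by rw [ha.1, mul_ld, one_mul, mul_one])

theorem ld_one_mem_nucleus {a : Q} (ha : a ∈ nucleus Q) : ld a 1 ∈ nucleus Q := by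
  obtain ⟨ha₁, ha₂, ha₃⟩ := ha
  have hinv : ld a 1 * a = 1 := ld_one_mul_of_mem_nucleus ⟨ha₁, ha₂, ha₃⟩
  have h₁ : ∀ x y : Q, ld a 1 * (x * y) = (ld a 1 * x) * y := fun x y =>
    mul_left_cancel (by
      rw [ha₁ _ (x * y), ha₁ _ y, ha₁ _ x, mul_ld, one_mul, one_mul])
  refine ⟨h₁, fun x y => ?_, fun x y => ?_⟩
  · calc x * (ld a 1 * y) = x * ((ld a 1 * a) * ld a y) := by rw [← h₁, mul_ld]
      _ = (x * ld a 1) * (a * ld a y) := by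
        rw [hinv, one_mul, ha₂, ← ha₃, hinv, mul_one]
      _ = (x * ld a 1) * y := by rw [mul_ld]
  · calc x * (y * ld a 1) = x * (rd y a * (a * ld a 1)) := by rw [ha₂, rd_mul]
      _ = ((x * rd y a) * a) * ld a 1 := by rw [mul_ld, mul_one, ← ha₂, mul_ld, mul_one]
      _ = (x * y) * ld a 1 := by rw [← ha₃, rd_mul]

instance : Group (nucleus Q) where
  mul a b := ⟨a * b, mul_mem_nucleus a.2 b.2⟩
  one := ⟨1, one_mem_nucleus⟩
  inv a := ⟨ld a 1, ld_one_mem_nucleus a.2⟩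
  mul_assoc a b c := Subtype.ext (a.2.1 b c).symm
  one_mul a := Subtype.ext (one_mul a.1)
  mul_one a := Subtype.ext (mul_one a.1)
  inv_mul_cancel a := Subtype.ext (ld_one_mul_of_mem_nucleus a.2)

theorem pow_coe_nucleus (a : nucleus Q) (k : ℕ) :
    pow (a : Q) k = ((a ^ k : nucleus Q) : Q) := by
  induction k with
  | zero => rfl
  | succ k ih => rw [_root_.pow_succ', pow, ih]; rfl

end Nucleus

section Cosets

def nucleusSetoid (Q : Type*) [Loop Q] : Setoid Q where
  r x y := ∃ n ∈ nucleus Q, y = x * n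
  iseqv.refl x := ⟨1, one_mem_nucleus, (mul_one x).symm⟩
  iseqv.symm := by
    rintro x _ ⟨n, hn, rfl⟩
    exact ⟨ld n 1, ld_one_mem_nucleus hn, by rw [← hn.2.1, mul_ld, mul_one]⟩
  iseqv.trans := by
    rintro x _ _ ⟨n, hn, rfl⟩ ⟨m, hm, rfl⟩
    exact ⟨n * m, mul_mem_nucleus hn hm, (hn.2.1 x m).symm⟩

noncomputable def equivQuotientNucleusProd (Q : Type*) [Loop Q] :
    Q ≃ Quotient (nucleusSetoid Q) × nucleus Q where
  toFun x := (⟦x⟧, ⟨ld (⟦x⟧ : Quotient (nucleusSetoid Q)).out x, by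
    obtain ⟨n, hn, hx⟩ := Quotient.exact (Quotient.out_eq (⟦x⟧ : Quotient (nucleusSetoid Q)))
    rwa [ld_eq_of_mul_eq hx.symm]⟩)
  invFun q := q.1.out * q.2
  left_inv x := mul_ld _ x
  right_inv := by
    rintro ⟨q, n, hn⟩
    have hq : (⟦q.out * n⟧ : Quotient (nucleusSetoid Q)) = q :=
      (Quotient.sound (s := nucleusSetoid Q) ⟨n, hn, rfl⟩).symm.trans (Quotient.out_eq q)
    simp only [hq, ld_mul]

theorem card_eq_card_quotient_mul_card_nucleus :
    Nat.card Q = Nat.card (Quotient (nucleusSetoid Q)) * Nat.card (nucleus Q) := by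
  rw [Nat.card_congr (equivQuotientNucleusProd Q), Nat.card_prod]

end Cosets

section CC

def IsLCC (Q : Type*) [Loop Q] : Prop :=
  ∀ x y z : Q, x * (y * z) = rd (x * y) x * (x * z)

def IsRCC (Q : Type*) [Loop Q] : Prop :=
  ∀ x y z : Q, (z * y) * x = (z * x) * ld x (y * x)

theorem IsCC.isLCC (hcc : IsCC Q) : IsLCC Q := hcc.1

theorem IsCC.isRCC (hcc : IsCC Q) : IsRCC Q := hcc.2

def NormalizesLeftMul (g : Q → Q) : Prop := ∀ c, ∃ u, ∀ v, g (c * v) = u * g v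

def NormalizesRightMul (g : Q → Q) : Prop := ∀ c, ∃ u, ∀ v, g (v * c) = g v * u

theorem NormalizesLeftMul.comp {f g : Q → Q} (hf : NormalizesLeftMul f)
    (hg : NormalizesLeftMul g) : NormalizesLeftMul (f ∘ g) := fun c => by
  obtain ⟨u, hu⟩ := hg c
  obtain ⟨w, hw⟩ := hf u
  exact ⟨w, fun v => by simp only [Function.comp_apply, hu, hw]⟩

theorem NormalizesRightMul.comp {f g : Q → Q} (hf : NormalizesRightMul f)
    (hg : NormalizesRightMul g) : NormalizesRightMul (f ∘ g) := fun c => by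
  obtain ⟨u, hu⟩ := hg c
  obtain ⟨w, hw⟩ := hf u
  exact ⟨w, fun v => by simp only [Function.comp_apply, hu, hw]⟩

theorem IsLCC.ld_mul_eq_mul_ld (hl : IsLCC Q) (a c v : Q) :
    ld a (c * v) = ld a (c * a) * ld a v :=
  ld_eq_of_mul_eq (by rw [hl, mul_ld, mul_ld, mul_rd])

theorem IsLCC.ld_rd_mul (hl : IsLCC Q) (z a b v : Q) :
    ld z (rd (z * v) b * a) = rd v (ld z b) * ld z a := by
  have hzv : rd (z * v) b = rd (z * rd v (ld z b)) z := by
    conv_lhs => rw [← rd_mul v (ld z b), hl, mul_ld]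
    rw [mul_rd]
  exact hzv ▸ ld_eq_of_mul_eq (by rw [hl, mul_ld])

theorem IsLCC.normalizesLeftMul_mul (hl : IsLCC Q) (a : Q) : NormalizesLeftMul (a * ·) :=
  fun c => ⟨rd (a * c) a, hl a c⟩

theorem IsLCC.normalizesLeftMul_ld (hl : IsLCC Q) (a : Q) : NormalizesLeftMul (ld a) :=
  fun c => ⟨ld a (c * a), hl.ld_mul_eq_mul_ld a c⟩

theorem IsRCC.rd_mul_eq_mul_rd (hr : IsRCC Q) (a c v : Q) :
    rd (v * c) a = rd v a * rd (a * c) a := by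
  refine (mul_right_cancel (a := a) ?_).symm
  rw [hr, rd_mul, rd_mul, ld_mul, rd_mul]

theorem IsRCC.normalizesRightMul_mul (hr : IsRCC Q) (a : Q) : NormalizesRightMul (· * a) :=
  fun c => ⟨ld a (c * a), fun v => hr a c v⟩

theorem IsRCC.normalizesRightMul_rd (hr : IsRCC Q) (a : Q) : NormalizesRightMul (rd · a) :=
  fun c => ⟨rd (a * c) a, fun v => hr.rd_mul_eq_mul_rd a c v⟩

theorem IsRCC.right_nuclear_ld_mul (hr : IsRCC Q) {a : Q} (ha : ∀ x y, x * (y * a) = (x * y) * a)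
    (b : Q) : ∀ x y, x * (y * ld b (a * b)) = (x * y) * ld b (a * b) := by
  have key : ∀ v w, (v * w) * ld b (a * b) = v * ld b ((rd (b * w) b * a) * b) := fun v w =>
    calc (v * w) * ld b (a * b) = (rd (v * w) b * a) * b := by rw [hr b a, rd_mul]
      _ = (rd v b * (rd (b * w) b * a)) * b := by rw [hr.rd_mul_eq_mul_rd, ha]
      _ = v * ld b ((rd (b * w) b * a) * b) := by rw [hr b, rd_mul]
  intro x y
  have hy := key 1 y
  rw [one_mul, one_mul] at hy
  rw [key, hy]

theorem IsCC.mem_nucleus_of_middle (hcc : IsCC Q) {a : Q}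
    (ha : ∀ x y, x * (a * y) = (x * a) * y) : a ∈ nucleus Q :=
  ⟨fun x y => by rw [hcc.isLCC a x y, ha, rd_mul], ha,
   fun x y => by rw [hcc.isRCC a y x, ← ha, mul_ld]⟩

theorem IsCC.mem_nucleus_of_right (hcc : IsCC Q) {a : Q}
    (ha : ∀ x y, x * (y * a) = (x * y) * a) : a ∈ nucleus Q :=
  hcc.mem_nucleus_of_middle fun v w =>
    calc v * (a * w) = v * (w * ld w (a * w)) := by rw [mul_ld]
      _ = (v * w) * ld w (a * w) := hcc.isRCC.right_nuclear_ld_mul ha w v w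
      _ = (v * a) * w := (hcc.isRCC w a v).symm

theorem IsCC.ld_mul_mem_nucleus (hcc : IsCC Q) {n : Q} (hn : n ∈ nucleus Q) (b : Q) :
    ld b (n * b) ∈ nucleus Q :=
  hcc.mem_nucleus_of_right (hcc.isRCC.right_nuclear_ld_mul hn.2.2 b)

theorem IsCC.mem_nucleus_of_normalizes (hcc : IsCC Q) {g : Q → Q}
    (hg : Function.Surjective g) (hL : NormalizesLeftMul g) (hR : NormalizesRightMul g) :
    g 1 ∈ nucleus Q := by
  have hL' : ∀ c v, g (c * v) = rd (g c) (g 1) * g v := fun c v => by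
    obtain ⟨u, hu⟩ := hL c
    have hc := hu 1
    rw [mul_one] at hc
    rw [hu, hc, mul_rd]
  have hR' : ∀ c v, g (v * c) = g v * ld (g 1) (g c) := fun c v => by
    obtain ⟨u, hu⟩ := hR c
    have hc := hu 1
    rw [one_mul] at hc
    rw [hu, hc, ld_mul]
  have key : ∀ s t, rd s (g 1) * t = s * ld (g 1) t := fun s t => by
    obtain ⟨s, rfl⟩ := hg s
    obtain ⟨t, rfl⟩ := hg t
    rw [← hL', hR']
  refine hcc.mem_nucleus_of_middle fun x y => ?_
  simpa only [mul_rd, ld_mul] using key (x * g 1) (g 1 * y)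

theorem IsCC.mul_mul_ld_mul (hcc : IsCC Q) (x y v : Q) :
    x * (y * ld (x * y) v) = rd (rd v y) x * (x * y) := by
  have hv := hcc.isRCC y (ld x (rd v y)) x
  rw [mul_ld, rd_mul] at hv
  rw [ld_eq_of_mul_eq hv.symm, mul_ld, hcc.isLCC x, mul_ld]

theorem IsCC.comp_mul_left_eq_comp_mul_right (hcc : IsCC Q) (z x y : Q) :
    ld z ∘ (x * ·) ∘ (y * ·) ∘ ld (x * y) ∘ (z * ·) =
      (· * ld z (x * y)) ∘ (rd · (ld z x)) ∘ (· * ld z 1) ∘ (rd · (ld z y)) := by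
  funext v
  have hzv : rd (z * v) y = z * (rd v (ld z y) * ld z 1) := by
    rw [← hcc.isLCC.ld_rd_mul z 1 y v, mul_one, mul_ld]
  simp only [Function.comp_apply]
  rw [hcc.mul_mul_ld_mul, hzv, hcc.isLCC.ld_rd_mul]

theorem IsCC.exists_mem_nucleus_mul_mul_eq (hcc : IsCC Q) (x y w : Q) :
    ∃ n ∈ nucleus Q, x * (y * w) = ((x * y) * w) * n := by
  set z := (x * y) * w
  have hL := (hcc.isLCC.normalizesLeftMul_ld z).comp <|
    (hcc.isLCC.normalizesLeftMul_mul x).comp <| (hcc.isLCC.normalizesLeftMul_mul y).comp <|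
    (hcc.isLCC.normalizesLeftMul_ld (x * y)).comp <| hcc.isLCC.normalizesLeftMul_mul z
  have hR := (hcc.isRCC.normalizesRightMul_mul (ld z (x * y))).comp <|
    (hcc.isRCC.normalizesRightMul_rd (ld z x)).comp <|
    (hcc.isRCC.normalizesRightMul_mul (ld z 1)).comp <| hcc.isRCC.normalizesRightMul_rd (ld z y)
  rw [← hcc.comp_mul_left_eq_comp_mul_right] at hR
  have hsurj := (ld_surjective z).comp <| (mul_left_surjective x).comp <|
    (mul_left_surjective y).comp <| (ld_surjective (x * y)).comp <| mul_left_surjective z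
  refine ⟨_, hcc.mem_nucleus_of_normalizes hsurj hL hR, ?_⟩
  simp only [Function.comp_apply, mul_one, z, ld_mul, mul_ld]

end CC

section QuotientGroup

theorem IsCC.nucleusSetoid_mul (hcc : IsCC Q) {a₁ a₂ b₁ b₂ : Q} (ha : nucleusSetoid Q a₁ a₂)
    (hb : nucleusSetoid Q b₁ b₂) : nucleusSetoid Q (a₁ * b₁) (a₂ * b₂) := by
  obtain ⟨n, hn, rfl⟩ := ha
  obtain ⟨m, hm, rfl⟩ := hb
  have hc := hcc.ld_mul_mem_nucleus hn b₁
  refine ⟨ld b₁ (n * b₁) * m, mul_mem_nucleus hc hm, ?_⟩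
  rw [hm.2.2, ← hn.2.1, ← mul_ld b₁ (n * b₁), hc.2.2, ← hm.2.2, mul_ld]

theorem IsCC.nucleusSetoid_ld_one (hcc : IsCC Q) {a₁ a₂ : Q} (ha : nucleusSetoid Q a₁ a₂) :
    nucleusSetoid Q (ld a₁ 1) (ld a₂ 1) := by
  obtain ⟨n, hn, rfl⟩ := ha
  refine ⟨ld (ld a₁ 1) (ld n 1 * ld a₁ 1),
    hcc.ld_mul_mem_nucleus (ld_one_mem_nucleus hn) (ld a₁ 1), ?_⟩
  rw [mul_ld]
  exact ld_eq_of_mul_eq (by rw [← hn.2.1, hn.1, mul_ld, one_mul, mul_ld])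

abbrev IsCC.quotientGroup (hcc : IsCC Q) : Group (Quotient (nucleusSetoid Q)) :=
  letI : Mul (Quotient (nucleusSetoid Q)) :=
    ⟨Quotient.map₂ (· * ·) fun _ _ ha _ _ hb => hcc.nucleusSetoid_mul ha hb⟩
  letI : Inv (Quotient (nucleusSetoid Q)) :=
    ⟨Quotient.map (ld · 1) fun _ _ ha => hcc.nucleusSetoid_ld_one ha⟩
  letI : One (Quotient (nucleusSetoid Q)) := ⟨⟦1⟧⟩
  Group.ofRightAxioms
    (by
      rintro ⟨a⟩ ⟨b⟩ ⟨c⟩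
      obtain ⟨n, hn, h⟩ := hcc.exists_mem_nucleus_mul_mul_eq a b c
      exact Quotient.sound ⟨n, hn, h⟩)
    (by rintro ⟨a⟩; exact congrArg _ (mul_one a))
    (by rintro ⟨a⟩; exact congrArg _ (mul_ld a 1))

theorem IsCC.mk_pow (hcc : IsCC Q) (a : Q) (k : ℕ) :
    letI := hcc.quotientGroup
    (⟦a⟧ : Quotient (nucleusSetoid Q)) ^ k = ⟦pow a k⟧ := by
  let := hcc.quotientGroup
  induction k with
  | zero => rfl
  | succ k ih => rw [_root_.pow_succ', ih]; rfl

end QuotientGroup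

section PowerAssociative

theorem subset_closure (S : Set Q) : S ⊆ closure S :=
  fun _ ha => Set.mem_sInter.mpr fun _ hT => hT.2 ha

theorem one_mem_closure (S : Set Q) : (1 : Q) ∈ closure S :=
  Set.mem_sInter.mpr fun _ hT => hT.1.1

theorem mul_mem_closure {S : Set Q} {a b : Q} (ha : a ∈ closure S) (hb : b ∈ closure S) :
    a * b ∈ closure S :=
  Set.mem_sInter.mpr fun T hT =>
    hT.1.2.1 a (Set.mem_sInter.mp ha T hT) b (Set.mem_sInter.mp hb T hT)

theorem pow_mem_closure (a : Q) : ∀ k : ℕ, pow a k ∈ closure {a}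
  | 0 => one_mem_closure _
  | k + 1 => mul_mem_closure (subset_closure _ rfl) (pow_mem_closure a k)

variable {a : Q}

theorem pow_add (ha : IsPA a) (m n : ℕ) : pow a (m + n) = pow a m * pow a n := by
  induction m with
  | zero => rw [Nat.zero_add, pow, one_mul]
  | succ m ih =>
    rw [Nat.succ_add, pow, pow, ih,
      ha a (subset_closure _ rfl) _ (pow_mem_closure a m) _ (pow_mem_closure a n)]

theorem pow_mul (ha : IsPA a) (m k : ℕ) : pow (pow a m) k = pow a (m * k) := by
  induction k with
  | zero => rfl
  | succ k ih => rw [pow, ih, ← pow_add ha, Nat.mul_succ, Nat.add_comm]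

theorem exists_pos_pow_eq_one [Finite Q] (ha : IsPA a) : ∃ k, 0 < k ∧ pow a k = 1 := by
  obtain ⟨i, j, hij, he⟩ := Finite.exists_ne_map_eq_of_infinite (pow a)
  wlog hlt : i < j generalizing i j
  · exact this j i hij.symm he.symm (by omega)
  refine ⟨j - i, by omega, mul_left_cancel (a := pow a i) ?_⟩
  rw [← pow_add ha, Nat.add_sub_cancel' hlt.le, ← he, mul_one]

theorem exists_ne_one_pow_eq_one [Finite Q] (ha : IsPA a) {p : ℕ} (hp : 1 < p)
    (hdvd : ∀ k, pow a k = 1 → p ∣ k) : ∃ x : Q, x ≠ 1 ∧ pow x p = 1 := by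
  classical
  have hex := exists_pos_pow_eq_one ha
  obtain ⟨hpos, hm⟩ := Nat.find_spec hex
  obtain ⟨c, hc⟩ := hdvd _ hm
  have hc_pos : 0 < c := Nat.pos_of_mul_pos_left (hc ▸ hpos)
  refine ⟨pow a c, fun h => Nat.find_min hex ?_ ⟨hc_pos, h⟩, ?_⟩
  · rw [hc]
    exact lt_mul_left hc_pos hp
  · rw [pow_mul ha, Nat.mul_comm, ← hc, hm]

end PowerAssociative

section Cauchy

variable [Finite Q] {p : ℕ}

theorem exists_forall_pow_eq_one_dvd_of_dvd_card_nucleus (hp : p.Prime)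
    (hdvd : p ∣ Nat.card (nucleus Q)) : ∃ a : Q, ∀ k, pow a k = 1 → p ∣ k := by
  obtain ⟨a, ha⟩ := exists_prime_orderOf_dvd_card' (hp := ⟨hp⟩) p hdvd
  refine ⟨a, fun k hk => ha ▸ orderOf_dvd_of_pow_eq_one (Subtype.ext ?_)⟩
  rw [← pow_coe_nucleus, hk]
  rfl

theorem IsCC.exists_forall_pow_eq_one_dvd_of_dvd_card_quotient (hcc : IsCC Q) (hp : p.Prime)
    (hdvd : p ∣ Nat.card (Quotient (nucleusSetoid Q))) :
    ∃ a : Q, ∀ k, pow a k = 1 → p ∣ k := by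
  let := hcc.quotientGroup
  obtain ⟨q, ha⟩ := exists_prime_orderOf_dvd_card' (hp := ⟨hp⟩) p hdvd
  obtain ⟨a, rfl⟩ := Quotient.exists_rep q
  refine ⟨a, fun k hk => ha ▸ orderOf_dvd_of_pow_eq_one ?_⟩
  rw [hcc.mk_pow, hk]
  rfl

end Cauchy

end Loop

/-- A finite power-associative CC-loop whose order is divisible by a prime `p`
contains an element of order `p`. -/
theorem stmt_3 {Q : Type*} [Loop Q] [Finite Q] (hcc : IsCC Q)
    (hpa : ∀ a : Q, IsPA a) (p : ℕ) (hp : p.Prime) (hdvd : p ∣ Nat.card Q) :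
    ∃ x : Q, x ≠ 1 ∧ pow x p = 1 := by
  obtain ⟨a, ha⟩ : ∃ a : Q, ∀ k, pow a k = 1 → p ∣ k := by
    rw [card_eq_card_quotient_mul_card_nucleus, hp.dvd_mul] at hdvd
    rcases hdvd with hquot | hnuc
    · exact hcc.exists_forall_pow_eq_one_dvd_of_dvd_card_quotient hp hquot
    · exact exists_forall_pow_eq_one_dvd_of_dvd_card_nucleus hp hnuc
  exact exists_ne_one_pow_eq_one (hpa a) hp.one_lt ha
end

section
/- Let Q be a CC-loop and let α be a nuclear automorphism of Q, i.e., a bijection α : Q → Q with α(x·y) = α(x)·α(y) for all x, y, and such that x \ α(x) ∈ N(Q) for all x. Then α commutes with every left and right inner mapping: for all x, y, z ∈ Q, α((y·x)\(y·(x·z))) = (y·x)\(y·(x·α(z))) and α(((z·x)·y)/(x·y)) = ((α(z)·x)·y)/(x·y). -/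
open Loop

/-!
Write `α x = x·a` and `α y = y·b` with `a, b` nuclear. As `α` is a homomorphism,
`α ∘ L(x,y) = L(x·a, y·b) ∘ α`, so it suffices that `L(x·a, y·b) = L(x,y)` and
`R(x·a, y·b) = R(x,y)`. In a CC-loop the conjugates `(y·b)/y` and `y\(a·y)` of nuclear elements
are left, resp. right nuclear, so `y·b` and `a·y` may be rewritten as `c·y` and `y·m`, and
such factors pass through the inner mappings. The one factor left over, `a` in `L(x·a, y)`,
disappears because `L(x,y)` is an automorphism of an LCC-loop and fixes nuclear elements.
-/

namespace Loop

variable {Q : Type*} [Loop Q]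

def IsLeftNuclear (a : Q) : Prop := ∀ x y : Q, a * (x * y) = (a * x) * y

def IsRightNuclear (a : Q) : Prop := ∀ x y : Q, x * (y * a) = (x * y) * a

def leftInner (x y z : Q) : Q := ld (y * x) (y * (x * z))

def rightInner (x y z : Q) : Q := rd ((z * x) * y) (x * y)

theorem ld_eq_of_mul_eq_s7 {x y t : Q} (h : x * t = y) : ld x y = t := by
  rw [← h, ld_mul]

theorem rd_eq_of_mul_eq {x y t : Q} (h : t * y = x) : rd x y = t := by
  rw [← h, mul_rd]

theorem ld_mul_mul_of_isLeftNuclear {c : Q} (hc : IsLeftNuclear c) (u v : Q) :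
    ld (c * u) (c * v) = ld u v :=
  ld_eq_of_mul_eq_s7 (by rw [← hc, mul_ld])

theorem rd_mul_mul_of_isRightNuclear {b : Q} (hb : IsRightNuclear b) (u v : Q) :
    rd (u * b) (v * b) = rd u v :=
  rd_eq_of_mul_eq (by rw [hb, rd_mul])

theorem map_ld {Q' : Type*} [Loop Q'] {f : Q → Q'} (hf : ∀ x y, f (x * y) = f x * f y)
    (u v : Q) : f (ld u v) = ld (f u) (f v) :=
  (ld_eq_of_mul_eq_s7 (by rw [← hf, mul_ld])).symm

theorem map_rd {Q' : Type*} [Loop Q'] {f : Q → Q'} (hf : ∀ x y, f (x * y) = f x * f y)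
    (u v : Q) : f (rd u v) = rd (f u) (f v) :=
  (rd_eq_of_mul_eq (by rw [← hf, rd_mul])).symm

theorem map_leftInner {Q' : Type*} [Loop Q'] {f : Q → Q'}
    (hf : ∀ x y, f (x * y) = f x * f y) (x y z : Q) :
    f (leftInner x y z) = leftInner (f x) (f y) (f z) := by
  simp only [leftInner, map_ld hf, hf]

theorem map_rightInner {Q' : Type*} [Loop Q'] {f : Q → Q'}
    (hf : ∀ x y, f (x * y) = f x * f y) (x y z : Q) :
    f (rightInner x y z) = rightInner (f x) (f y) (f z) := by
  simp only [rightInner, map_rd hf, hf]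

theorem leftInner_apply_of_isRightNuclear {a : Q} (ha : IsRightNuclear a) (x y : Q) :
    leftInner x y a = a := by
  rw [leftInner, ha, ld_mul]

theorem rightInner_mul_of_mem_nucleus {a : Q} (ha : a ∈ nucleus Q) (x y : Q) :
    rightInner (x * a) y = rightInner x (a * y) := by
  obtain ⟨-, ha₂, ha₃⟩ := ha
  funext w
  rw [rightInner, rightInner, ha₃, ← ha₂, ← ha₂]

theorem leftInner_mul_left_of_isLeftNuclear {c : Q} (hc : IsLeftNuclear c) (x y : Q) :
    leftInner x (c * y) = leftInner x y := by
  funext w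
  rw [leftInner, leftInner, ← hc, ← hc, ld_mul_mul_of_isLeftNuclear hc]

theorem rightInner_mul_right_of_isRightNuclear {b : Q} (hb : IsRightNuclear b) (x y : Q) :
    rightInner x (y * b) = rightInner x y := by
  funext w
  rw [rightInner, rightInner, hb, hb, rd_mul_mul_of_isRightNuclear hb]

theorem IsLCC.mul_mul_eq_mul_ld_mul_mul (h : IsLCC Q) (g u t : Q) : g * (u * t) = u * (ld u (g * u) * t) := by
  rw [h u, mul_ld, mul_rd]

theorem IsRCC.mul_mul_eq_mul_rd_mul_mul (h : IsRCC Q) (t u g : Q) : (t * u) * g = (t * rd (u * g) u) * u := by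
  rw [h u, rd_mul, ld_mul]

theorem IsLCC.leftInner_mul (h : IsLCC Q) (x y z w : Q) :
    leftInner x y (z * w) = leftInner x y z * leftInner x y w := by
  set g := rd (y * rd (x * z) x) y
  have hg : g * (y * x) = y * (x * z) := by rw [← h, rd_mul]
  have key : y * (x * (z * w)) = (y * x) * (leftInner x y z * leftInner x y w) :=
    calc y * (x * (z * w))
        = g * (y * (x * w)) := by rw [h x, h y]
      _ = g * ((y * x) * leftInner x y w) := by rw [leftInner, mul_ld]
      _ = (y * x) * (leftInner x y z * leftInner x y w) := by rw [h.mul_mul_eq_mul_ld_mul_mul, hg]; rfl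
  rw [leftInner, key, ld_mul]

theorem IsLCC.leftInner_mul_right_of_mem_nucleus (h : IsLCC Q) {a : Q} (ha : a ∈ nucleus Q)
    (x y : Q) : leftInner (x * a) y = leftInner x y := by
  obtain ⟨-, ha₂, ha₃⟩ := ha
  funext w
  have hL : leftInner x y (a * w) = a * leftInner x y w := by
    rw [h.leftInner_mul, leftInner_apply_of_isRightNuclear ha₃]
  calc leftInner (x * a) y w
      = ld ((y * x) * a) ((y * x) * leftInner x y (a * w)) := by
        rw [leftInner, ha₃, ← ha₂, leftInner, mul_ld]
    _ = leftInner x y w := by rw [hL, ha₂, ld_mul]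

theorem IsCC.isLeftNuclear_rd_mul (hcc : IsCC Q) {a : Q} (ha : a ∈ nucleus Q) (x : Q) :
    IsLeftNuclear (rd (x * a) x) := by
  have hl : IsLCC Q := hcc.1
  have hr : IsRCC Q := hcc.2
  obtain ⟨ha₁, ha₂, -⟩ := ha
  set c := rd (x * a) x
  intro y z
  have hcy : ld x ((c * y) * x) = a * ld x (y * x) := by
    rw [hr x y c, rd_mul, ← ha₂, ld_mul]
  calc c * (y * z)
      = c * (x * (ld x (y * x) * ld x z)) := by rw [← hl.mul_mul_eq_mul_ld_mul_mul, mul_ld]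
    _ = x * (a * (ld x (y * x) * ld x z)) := by rw [hl x a]
    _ = x * (ld x ((c * y) * x) * ld x z) := by rw [ha₁, hcy]
    _ = (c * y) * z := by rw [← hl.mul_mul_eq_mul_ld_mul_mul, mul_ld]

theorem IsCC.isRightNuclear_ld_mul (hcc : IsCC Q) {a : Q} (ha : a ∈ nucleus Q) (y : Q) :
    IsRightNuclear (ld y (a * y)) := by
  have hl : IsLCC Q := hcc.1
  have hr : IsRCC Q := hcc.2
  obtain ⟨-, ha₂, ha₃⟩ := ha
  set m := ld y (a * y)
  intro z t
  have hmy : ∀ v, (v * y) * m = (v * a) * y := fun v => by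
    rw [hr.mul_mul_eq_mul_rd_mul_mul, mul_ld, mul_rd]
  have hym : rd (y * (t * m)) y = rd (y * t) y * a := by
    rw [hl y t m, mul_ld, ha₂, mul_rd]
  symm
  calc (z * t) * m
      = ((rd z y * rd (y * t) y) * y) * m := by rw [← hr.mul_mul_eq_mul_rd_mul_mul, rd_mul]
    _ = (rd z y * rd (y * (t * m)) y) * y := by rw [hmy, ← ha₃, hym]
    _ = z * (t * m) := by rw [← hr.mul_mul_eq_mul_rd_mul_mul, rd_mul]

theorem IsCC.leftInner_mul_mul_of_mem_nucleus (hcc : IsCC Q) {a b : Q} (ha : a ∈ nucleus Q)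
    (hb : b ∈ nucleus Q) (x y : Q) : leftInner (x * a) (y * b) = leftInner x y := by
  have hby : y * b = rd (y * b) y * y := (rd_mul _ _).symm
  rw [hby, leftInner_mul_left_of_isLeftNuclear (hcc.isLeftNuclear_rd_mul hb y),
    IsLCC.leftInner_mul_right_of_mem_nucleus hcc.1 ha]

theorem IsCC.rightInner_mul_mul_of_mem_nucleus (hcc : IsCC Q) {a b : Q} (ha : a ∈ nucleus Q)
    (hb : b ∈ nucleus Q) (x y : Q) : rightInner (x * a) (y * b) = rightInner x y := by
  have hay : a * y = y * ld y (a * y) := (mul_ld _ _).symm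
  rw [rightInner_mul_right_of_isRightNuclear hb.2.2, rightInner_mul_of_mem_nucleus ha, hay,
    rightInner_mul_right_of_isRightNuclear (hcc.isRightNuclear_ld_mul ha y)]

end Loop

theorem stmt_7_general {Q : Type*} [Loop Q] (hcc : IsCC Q)
    (α : Q → Q)
    (hhom : ∀ x y : Q, α (x * y) = α x * α y)
    (hnuc : ∀ x : Q, ld x (α x) ∈ nucleus Q) :
    ∀ x y z : Q,
      α (ld (y * x) (y * (x * z))) = ld (y * x) (y * (x * α z)) ∧
      α (rd ((z * x) * y) (x * y)) = rd ((α z * x) * y) (x * y) := by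
  intro x y z
  have hα : ∀ u, α u = u * ld u (α u) := fun u => (mul_ld u (α u)).symm
  constructor
  · calc α (leftInner x y z)
        = leftInner (x * ld x (α x)) (y * ld y (α y)) (α z) := by
          rw [map_leftInner hhom, ← hα, ← hα]
      _ = leftInner x y (α z) := by
          rw [hcc.leftInner_mul_mul_of_mem_nucleus (hnuc x) (hnuc y)]
  · calc α (rightInner x y z)
        = rightInner (x * ld x (α x)) (y * ld y (α y)) (α z) := by
          rw [map_rightInner hhom, ← hα, ← hα]
      _ = rightInner x y (α z) := by
          rw [hcc.rightInner_mul_mul_of_mem_nucleus (hnuc x) (hnuc y)]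

/-- In a CC-loop, every nuclear automorphism commutes with all left and right
inner mappings. -/
theorem stmt_7 {Q : Type*} [Loop Q] (hcc : IsCC Q)
    (α : Q → Q) (hbij : Function.Bijective α)
    (hhom : ∀ x y : Q, α (x * y) = α x * α y)
    (hnuc : ∀ x : Q, ld x (α x) ∈ nucleus Q) :
    ∀ x y z : Q,
      α (ld (y * x) (y * (x * z))) = ld (y * x) (y * (x * α z)) ∧
      α (rd ((z * x) * y) (x * y)) = rd ((α z * x) * y) (x * y) :=
  stmt_7_general hcc α hhom hnuc
end

section
/- In an extra loop, L(x,y) = R(x,y) = L(y,x) = R(y,x) and L(x,y)² = I: for all x, y, z, (y·x)\(y·(x·z)) = ((z·x)·y)/(x·y), the value (y·x)\(y·(x·z)) is unchanged when x and y are interchanged, and applying the map z ↦ (y·x)\(y·(x·z)) twice returns z. -/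
open Loop

namespace ExtraProof

open Loop

variable {Q : Type*} [Loop Q]

/-- inverse -/
def iv (a : Q) : Q := Loop.ld a 1

theorem cl (x : Q) {a b : Q} (h : x * a = x * b) : a = b := by
  have h2 := congrArg (Loop.ld x) h
  rwa [Loop.ld_mul, Loop.ld_mul] at h2

theorem cr (x : Q) {a b : Q} (h : a * x = b * x) : a = b := by
  have h2 := congrArg (fun t => Loop.rd t x) h
  simp only [Loop.mul_rd] at h2
  exact h2

section Main

variable (hE : ∀ x y z : Q, x * (y * (z * x)) = ((x * y) * z) * x)
include hE

theorem flex (x y : Q) : (x * y) * x = x * (y * x) := by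
  have h := hE x y 1
  rw [Loop.one_mul, Loop.mul_one] at h
  exact h.symm

omit hE in
theorem mul_iv (x : Q) : x * iv x = 1 := Loop.mul_ld x 1

theorem A1 (x w : Q) : x * (iv x * w) = w := by
  have h := hE x (iv x) (Loop.rd w x)
  rw [Loop.rd_mul] at h
  rw [mul_iv, Loop.one_mul, Loop.rd_mul] at h
  exact h

theorem IM (x : Q) : iv x * x = 1 := by
  apply cl x
  rw [A1 hE, Loop.mul_one]

theorem LIP (x u : Q) : iv x * (x * u) = u := by
  apply cl x
  rw [A1 hE]

theorem II (x : Q) : iv (iv x) = x := by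
  have h : Loop.ld (iv x) (iv x * x) = x := Loop.ld_mul (iv x) x
  rwa [IM hE] at h

theorem R1 (x u : Q) : (u * iv x) * x = u := by
  have e : ((x * (iv x * u)) * iv x) * x = x * (iv x * u) := by
    have h := hE x (iv x * u) (iv x)
    rw [IM hE, Loop.mul_one] at h
    exact h.symm
  rw [A1 hE] at e
  exact e

theorem R2 (x u : Q) : (u * x) * iv x = u := by
  have h := R1 hE (iv x) u
  rwa [II hE] at h

theorem RD (u x : Q) : Loop.rd u x = u * iv x := by
  apply cr x
  rw [Loop.rd_mul, R1 hE]

theorem LD (x u : Q) : Loop.ld x u = iv x * u := by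
  apply cl x
  rw [Loop.mul_ld, A1 hE]

theorem U2 (x v : Q) : (x * v) * iv x = x * (v * iv x) := by
  apply cr x
  rw [R1 hE, flex hE, R1 hE]

theorem U2' (x v : Q) : (iv x * v) * x = iv x * (v * x) := by
  have h := U2 hE (iv x) v
  rwa [II hE] at h

theorem D1 (x u v : Q) : (x * u) * (v * iv x) = (x * (u * v)) * iv x := by
  have h := hE x u (v * iv x)
  rw [R1 hE] at h
  have h2 := congrArg (fun t => t * iv x) h
  rw [R2 hE] at h2
  exact h2.symm

theorem D1' (x u v : Q) : (iv x * u) * (v * x) = (iv x * (u * v)) * x := by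
  have h := D1 hE (iv x) u v
  rwa [II hE] at h

theorem Upp (x u v : Q) :
    x * (u * v) = ((x * u) * iv x) * iv (iv v * iv x) := by
  have h := D1 hE x (u * v) (iv v)
  rw [R2 hE] at h
  have h2 := congrArg (fun t => t * iv (iv v * iv x)) h
  rw [R2 hE] at h2
  exact h2

theorem T (x s t : Q) :
    (s * iv x) * iv (iv (t * x) * iv x) = (s * t) * x := by
  have h := Upp hE x (iv x * s) (t * x)
  rw [A1 hE] at h
  rw [D1' hE] at h
  rw [U2' hE] at h
  rw [A1 hE] at h
  exact h.symm

theorem AAp (x w : Q) : iv (iv w * iv x) = x * w := by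
  have h := T hE x 1 (w * iv x)
  rw [Loop.one_mul, Loop.one_mul, R1 hE] at h
  have h2 := congrArg (fun t => x * t) h
  rw [A1 hE] at h2
  exact h2

theorem AAIP (a b : Q) : iv (a * b) = iv b * iv a := by
  have h := AAp hE (iv b) (iv a)
  rwa [II hE, II hE] at h

theorem Tp (x s t : Q) : (s * iv x) * (x * (t * x)) = (s * t) * x := by
  have h := T hE x s t
  rwa [AAp hE] at h

theorem RA (x w : Q) : (w * x) * x = w * (x * x) := by
  have h := Tp hE x (w * x) 1
  rw [R2 hE, Loop.one_mul, Loop.mul_one] at h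
  exact h.symm

theorem RB (x w t : Q) : ((w * x) * t) * x = w * (x * (t * x)) := by
  have h := Tp hE x (w * x) t
  rw [R2 hE] at h
  exact h.symm

theorem LB (x t w : Q) : x * (t * (x * w)) = ((x * t) * x) * w := by
  have h := RB hE (iv x) (iv w) (iv t)
  have h2 := congrArg iv h
  rw [AAIP hE ((iv w * iv x) * iv t) (iv x),
      AAIP hE (iv w * iv x) (iv t),
      AAIP hE (iv w) (iv x * (iv t * iv x)),
      AAIP hE (iv x) (iv t * iv x),
      AAp hE x w, AAp hE x t, II hE, II hE, II hE] at h2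
  exact h2

theorem LA (x w : Q) : x * (x * w) = (x * x) * w := by
  have h := LB hE x 1 w
  rwa [Loop.one_mul, Loop.mul_one] at h

theorem KEY (x u v : Q) :
    ((u * (x * v)) * x) * u = u * (x * ((v * x) * u)) := by
  have s1 : ∀ v' : Q, (x * (u * x)) * v' = (x * ((u * x) * (v' * x))) * iv x := by
    intro v'
    have h := hE x (u * x) v'
    have h2 := congrArg (fun t => t * iv x) h
    rw [R2 hE] at h2
    exact h2.symm
  have s2 : ∀ q : Q, (u * x) * q = (u * (x * (q * u))) * iv u := by
    intro q
    have h := hE u x q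
    have h2 := congrArg (fun t => t * iv u) h
    rw [R2 hE] at h2
    exact h2.symm
  have m1 := LB hE x u v
  rw [flex hE x u] at m1
  rw [s1 v] at m1
  rw [s2 (v * x)] at m1
  have m2 := congrArg (fun t => t * x) m1
  rw [R1 hE] at m2
  rw [flex hE x (u * (x * v))] at m2
  have m3 := cl x m2
  have m4 := congrArg (fun t => t * u) m3
  rw [R1 hE] at m4
  exact m4

theorem E2 (x a w : Q) : (a * x) * (w * x) = (a * (x * w)) * x := by
  have h1 := hE a x (w * x)
  have h2 := KEY hE x a w
  exact (cr a (h2.trans h1)).symm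

theorem E3 (x w a : Q) : (x * w) * (x * a) = x * ((w * x) * a) := by
  have h := E2 hE (iv x) (iv a) (iv w)
  have h2 := congrArg iv h
  rw [AAIP hE (iv a * iv x) (iv w * iv x),
      AAp hE x w, AAp hE x a,
      AAIP hE (iv a * (iv x * iv w)) (iv x),
      AAIP hE (iv a) (iv x * iv w),
      AAp hE w x, II hE, II hE] at h2
  exact h2

theorem NSm (x v s : Q) : (v * (x * x)) * s = v * ((x * x) * s) := by
  have key : ∀ w : Q, (v * (x * x)) * (w * x) = v * ((x * x) * (w * x)) := by
    intro w
    calc (v * (x * x)) * (w * x) = ((v * x) * x) * (w * x) := by rw [RA hE]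
      _ = ((v * x) * (x * w)) * x := by rw [E2 hE x (v * x) w]
      _ = v * (x * ((x * w) * x)) := RB hE x v (x * w)
      _ = v * (x * (x * (w * x))) := by rw [flex hE x w]
      _ = v * ((x * x) * (w * x)) := by rw [LA hE x (w * x)]
  have h := key (s * iv x)
  rwa [R1 hE] at h

theorem NSr (x a b : Q) : (a * b) * (x * x) = a * (b * (x * x)) := by
  have h1 : (a * (b * (x * x))) * iv (b * (x * x)) = a := R2 hE (b * (x * x)) a
  rw [AAIP hE b (x * x)] at h1
  rw [AAIP hE x x] at h1
  rw [← NSm hE (iv x) (a * (b * (x * x))) (iv b)] at h1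
  have h2 := congrArg (fun t => t * b) h1
  rw [R1 hE] at h2
  rw [← AAIP hE x x] at h2
  have h3 := congrArg (fun t => t * (x * x)) h2
  rw [R1 hE] at h3
  exact h3.symm

theorem NSl (x a b : Q) : (x * x) * (a * b) = ((x * x) * a) * b := by
  have k1 : iv ((x * x) * a) * (((x * x) * a) * b) = b := LIP hE ((x * x) * a) b
  rw [AAIP hE (x * x) a] at k1
  rw [AAIP hE x x] at k1
  rw [NSm hE (iv x) (iv a) (((x * x) * a) * b)] at k1
  rw [← AAIP hE x x] at k1
  have k2 := congrArg (fun t => a * t) k1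
  rw [A1 hE] at k2
  have k3 := congrArg (fun t => (x * x) * t) k2
  rw [A1 hE] at k3
  exact k3.symm

theorem c1E (x v y : Q) : x * ((iv x * v) * y) = (v * iv x) * (x * y) := by
  have base : ∀ s : Q, (x * (s * iv x)) * (x * y) = x * (s * y) := by
    intro s
    rw [E3 hE x (s * iv x) y, R1 hE]
  have h := base (iv x * v)
  rw [← U2 hE x (iv x * v), A1 hE] at h
  exact h.symm

theorem c4e (x v y : Q) : (v * y) * x = (v * x) * (iv x * (y * x)) := by
  have tp := Tp hE (iv x) v ((y * x) * x)
  rw [II hE] at tp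
  rw [R2 hE] at tp
  rw [RA hE] at tp
  rw [← NSr hE x v y] at tp
  rw [← RA hE] at tp
  rw [R2 hE] at tp
  exact tp.symm

theorem c4E (a y w : Q) : ((w * a) * y) * iv a = w * (a * (y * iv a)) := by
  have h := c4e hE (iv a) (w * a) y
  rw [II hE, R2 hE] at h
  exact h

theorem STAR (x y w : Q) :
    ((w * (x * y)) * y) * iv (x * y) = ((w * x) * y) * iv x := by
  have h1 := c4E hE (x * y) y w
  have e1 : y * iv (x * y) = iv x := by
    rw [AAIP hE x y]; exact A1 hE y (iv x)
  rw [e1] at h1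
  rw [U2 hE] at h1
  have h2 := c4E hE x y w
  exact h1.trans h2.symm

theorem C3b (x y v : Q) :
    ((v * iv x) * (x * y)) * y = ((v * y) * iv x) * (x * y) := by
  have h := STAR hE x y (v * iv x)
  rw [R1 hE] at h
  have h2 := congrArg (fun t => t * (x * y)) h
  rw [R1 hE] at h2
  exact h2

theorem F1p (x v y : Q) : iv x * ((x * v) * y) = (v * x) * (iv x * y) := by
  have h := c1E hE (iv x) v y
  rwa [II hE] at h

theorem F2p (x y v : Q) :
    ((v * x) * (iv x * y)) * y = ((v * y) * x) * (iv x * y) := by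
  have h := C3b hE (iv x) y v
  rwa [II hE] at h

theorem hshift (x y v : Q) :
    (iv x * ((x * v) * y)) * y = iv x * ((x * (v * y)) * y) := by
  rw [F1p hE x v y, F2p hE x y v, ← F1p hE x (v * y) y]

theorem hsq (x y w : Q) :
    iv x * ((x * (iv x * ((x * w) * y))) * y) = w * (y * y) := by
  rw [A1 hE x ((x * w) * y)]
  rw [RA hE y (x * w)]
  rw [← NSr hE y (iv x) (x * w)]
  rw [LIP hE x w]

theorem hmove (x y z : Q) :
    iv x * ((x * (z * iv y)) * y) = (iv x * ((x * z) * y)) * iv y := by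
  have h := hshift hE x y (z * iv y)
  rw [R1 hE y z] at h
  have h2 := congrArg (fun t => t * iv y) h
  rw [R2 hE] at h2
  exact h2

theorem CLAIM3 (x y z : Q) :
    iv x * ((x * ((iv x * ((x * z) * y)) * iv y)) * y) = z * y := by
  rw [← hmove hE x y z]
  rw [hsq hE x y (z * iv y)]
  rw [← RA hE y (z * iv y)]
  rw [R1 hE y z]

theorem REDp (x y u : Q) : (y * x) * ((iv x * (u * y)) * iv y) = y * u := by
  have h0 := hE y x ((iv x * (u * y)) * iv y)
  rw [R1 hE y (iv x * (u * y))] at h0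
  rw [A1 hE x (u * y)] at h0
  rw [← flex hE y u] at h0
  exact (cr y h0).symm

theorem REDf (x y z : Q) :
    Loop.ld (y * x) (y * (x * z)) = (iv x * ((x * z) * y)) * iv y := by
  apply cl (y * x)
  rw [Loop.mul_ld]
  exact (REDp hE x y (x * z)).symm

theorem goal3 (x y z : Q) :
    Loop.ld (y * x) (y * (x * (Loop.ld (y * x) (y * (x * z))))) = z := by
  rw [REDf hE x y z]
  rw [REDf hE x y ((iv x * ((x * z) * y)) * iv y)]
  rw [CLAIM3 hE x y z]
  exact R2 hE y z

theorem Tpm (x t s : Q) : ((x * t) * x) * (iv x * s) = x * (t * s) := by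
  have h := LB hE x t (iv x * s)
  rw [A1 hE x s] at h
  exact h.symm

theorem c1Em (x y v : Q) : (y * (v * iv x)) * x = (y * x) * (iv x * v) := by
  have base : ∀ s : Q, (y * x) * ((iv x * s) * x) = (y * s) * x := by
    intro s
    rw [E2 hE x y (iv x * s), A1 hE x s]
  have h := base (v * iv x)
  rw [U2' hE x (v * iv x)] at h
  rw [R1 hE x v] at h
  exact h.symm

theorem F1m (x y v : Q) : (y * (v * x)) * iv x = (y * iv x) * (x * v) := by
  have h := c1Em hE (iv x) y v
  rwa [II hE] at h

theorem L28m (x y v : Q) : ((x * y) * iv x) * (x * v) = x * (y * v) := by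
  have h := Tpm hE (iv x) ((x * x) * y) v
  rw [II hE] at h
  rw [← NSl hE x y v] at h
  rw [← LA hE x y] at h
  rw [LIP hE x (x * y)] at h
  rw [← LA hE x (y * v)] at h
  rw [LIP hE x (x * (y * v))] at h
  exact h

theorem c3E (a y w : Q) : iv a * (y * (a * w)) = ((iv a * y) * a) * w := by
  have h := L28m hE (iv a) y (a * w)
  rw [II hE, LIP hE a w] at h
  exact h.symm

theorem STARm (x y w : Q) :
    iv (y * x) * (y * ((y * x) * w)) = iv x * (y * (x * w)) := by
  have h1 := c3E hE (y * x) y w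
  have e1 : iv (y * x) * y = iv x := by
    rw [AAIP hE y x]; exact R1 hE y (iv x)
  rw [e1] at h1
  have h2 := c3E hE x y w
  rw [U2' hE x y] at h2
  exact h1.trans h2.symm

theorem C3bm (x y v : Q) :
    y * ((y * x) * (iv x * v)) = (y * x) * (iv x * (y * v)) := by
  have h := STARm hE x y (iv x * v)
  rw [A1 hE x v] at h
  have h2 := congrArg (fun t => (y * x) * t) h
  rw [A1 hE (y * x)] at h2
  exact h2

theorem F2m (x y v : Q) :
    y * ((y * iv x) * (x * v)) = (y * iv x) * (x * (y * v)) := by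
  have h := C3bm hE (iv x) y v
  rwa [II hE] at h

theorem Hshift (x y v : Q) :
    y * ((y * (v * x)) * iv x) = (y * ((y * v) * x)) * iv x := by
  rw [F1m hE x y v, F2m hE x y v, ← F1m hE x y (y * v)]

theorem Hsq (x y w : Q) :
    (y * (((y * (w * x)) * iv x) * x)) * iv x = (y * y) * w := by
  rw [R1 hE x (y * (w * x))]
  rw [LA hE y (w * x)]
  rw [NSl hE y w x]
  exact R2 hE x ((y * y) * w)

theorem Hmove (x y z : Q) :
    (y * ((iv y * z) * x)) * iv x = iv y * ((y * (z * x)) * iv x) := by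
  have h := Hshift hE x y (iv y * z)
  rw [A1 hE y z] at h
  have h2 := congrArg (fun t => iv y * t) h
  rw [LIP hE y] at h2
  exact h2

theorem CLAIM3m (x y z : Q) :
    (y * ((iv y * ((y * (z * x)) * iv x)) * x)) * iv x = y * z := by
  rw [Hmove hE x y ((y * (z * x)) * iv x)]
  rw [Hsq hE x y z]
  rw [← LA hE y z]
  exact LIP hE y (y * z)

theorem REDmp (x y u : Q) : (iv y * ((y * u) * iv x)) * (x * y) = u * y := by
  have star : ∀ w : Q, w * (x * y) = iv y * (((y * w) * x) * y) := by
    intro w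
    have h := hE y w x
    have h2 := congrArg (fun t => iv y * t) h
    rw [LIP hE y] at h2
    exact h2
  rw [star (iv y * ((y * u) * iv x))]
  rw [A1 hE y ((y * u) * iv x)]
  rw [R1 hE x (y * u)]
  rw [flex hE y u]
  exact LIP hE y (u * y)

theorem REDmf (x y z : Q) :
    Loop.rd ((z * x) * y) (x * y) = iv y * ((y * (z * x)) * iv x) := by
  apply cr (x * y)
  rw [Loop.rd_mul]
  exact (REDmp hE x y (z * x)).symm

theorem goal2 (x y z : Q) :
    Loop.ld (y * x) (y * (x * z)) = Loop.ld (x * y) (x * (y * z)) := by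
  rw [REDf hE x y z, REDf hE y x z]
  rw [F1p hE x z y]
  rw [F1p hE y z x]
  obtain ⟨a, rfl⟩ : ∃ a : Q, y = x * a := ⟨iv x * y, (A1 hE x y).symm⟩
  rw [LIP hE x a]
  have e2 : iv (x * a) * x = iv a := by
    rw [AAIP hE x a]; exact R1 hE x (iv a)
  rw [e2]
  have hR : ∀ w : Q, ((w * x) * a) * iv (x * a) = iv a * ((a * (w * x)) * iv x) := by
    intro w
    rw [← RD hE ((w * x) * a) (x * a)]
    exact REDmf hE x a w
  have RINV : ∀ w : Q,
      ((((((w * x) * a) * iv (x * a)) * x) * a) * iv (x * a)) = w := by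
    intro w
    rw [hR w]
    rw [hR (iv a * ((a * (w * x)) * iv x))]
    rw [CLAIM3m hE x a w]
    exact LIP hE a w
  have hW : ((((((z * (x * a)) * iv a) * iv x) * x) * a) * iv (x * a)) = z := by
    rw [R1 hE x ((z * (x * a)) * iv a)]
    rw [R1 hE a (z * (x * a))]
    exact R2 hE (x * a) z
  have hinj : ∀ A B : Q,
      (((A * x) * a) * iv (x * a)) = (((B * x) * a) * iv (x * a)) → A = B := by
    intro A B h
    have h1 := congrArg (fun t => t * (x * a)) h
    rw [R1 hE (x * a) ((A * x) * a), R1 hE (x * a) ((B * x) * a)] at h1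
    exact cr x (cr a h1)
  exact hinj _ _ ((RINV z).trans hW.symm)

theorem goal1 (x y z : Q) :
    Loop.ld (y * x) (y * (x * z)) = Loop.rd ((z * x) * y) (x * y) := by
  have hG1 : x * (y * (Loop.rd ((z * x) * y) (x * y))) = (x * y) * z := by
    rw [REDmf hE x y z]
    rw [A1 hE y ((y * (z * x)) * iv x)]
    rw [← U2 hE x (y * (z * x))]
    rw [hE x y z]
    exact R2 hE x ((x * y) * z)
  have e1 : Loop.ld (x * y) (x * (y * (Loop.rd ((z * x) * y) (x * y)))) = z := by
    rw [hG1]; exact Loop.ld_mul _ _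
  have e2 : Loop.ld (x * y) (x * (y * (Loop.ld (y * x) (y * (x * z))))) = z := by
    rw [goal2 hE x y z]; exact goal3 hE y x z
  have hGinj : ∀ A B : Q,
      Loop.ld (x * y) (x * (y * A)) = Loop.ld (x * y) (x * (y * B)) → A = B := by
    intro A B h
    have h1 := congrArg (fun t => (x * y) * t) h
    rw [Loop.mul_ld, Loop.mul_ld] at h1
    exact cl y (cl x h1)
  exact hGinj _ _ (e2.trans e1.symm)

end Main

end ExtraProof

/-- In an extra loop, `L(x,y) = R(x,y) = L(y,x) = R(y,x)` and `L(x,y)² = I`. -/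
theorem stmt_8 {Q : Type*} [Loop Q]
    (hextra : ∀ x y z : Q, x * (y * (z * x)) = ((x * y) * z) * x) :
    ∀ x y z : Q,
      ld (y * x) (y * (x * z)) = rd ((z * x) * y) (x * y) ∧
      ld (y * x) (y * (x * z)) = ld (x * y) (x * (y * z)) ∧
      ld (y * x) (y * (x * (ld (y * x) (y * (x * z))))) = z := by
  intro x y z
  exact ⟨ExtraProof.goal1 hextra x y z, ExtraProof.goal2 hextra x y z,
    ExtraProof.goal3 hextra x y z⟩
end

section
/- If Q is a finite extra loop which is not associative (i.e., there exist x, y, z ∈ Q with x·(y·z) ≠ (x·y)·z), then 16 divides the order |Q|. -/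
open Loop


namespace ExtraLoop

variable {Q : Type*} [Loop Q]

/-- The extra law as a predicate. -/
def Extra (Q : Type*) [Loop Q] : Prop :=
  ∀ x y z : Q, x * (y * (z * x)) = ((x * y) * z) * x

/-- inverse -/
def iv (x : Q) : Q := Loop.ld x 1

lemma mul_lcancel {x a b : Q} (h : x * a = x * b) : a = b := by
  have := congrArg (Loop.ld x) h
  simpa [Loop.ld_mul] using this

lemma mul_rcancel {x a b : Q} (h : a * x = b * x) : a = b := by
  have := congrArg (fun t => Loop.rd t x) h
  simpa [Loop.mul_rd] using this

lemma mul_iv (x : Q) : x * iv x = 1 := Loop.mul_ld x 1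

section
variable (he : Extra Q)
include he

lemma linv : ∀ x w : Q, x * (iv x * w) = w := by
  intro x w
  have h1 : x * (iv x * (Loop.rd w x * x)) = ((x * iv x) * Loop.rd w x) * x := he x (iv x) _
  rw [Loop.rd_mul] at h1
  rw [h1, mul_iv, Loop.one_mul, Loop.rd_mul]

lemma iv_mul (x : Q) : iv x * x = 1 := by
  apply mul_lcancel (x := x)
  rw [linv he, Loop.mul_one]

lemma linv' : ∀ x w : Q, iv x * (x * w) = w := by
  intro x w
  apply mul_lcancel (x := x)
  rw [linv he]

lemma ld_eq (x y : Q) : Loop.ld x y = iv x * y := by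
  apply mul_lcancel (x := x)
  rw [Loop.mul_ld, linv he]

lemma iv_iv (x : Q) : iv (iv x) = x := by
  apply mul_lcancel (x := iv x)
  rw [mul_iv, iv_mul he]

lemma rinv' : ∀ x w : Q, (w * iv x) * x = w := by
  intro x w
  have h1 : x * (Loop.ld x w * (iv x * x)) = ((x * Loop.ld x w) * iv x) * x := he x _ (iv x)
  rw [iv_mul he, Loop.mul_one, Loop.mul_ld] at h1
  exact h1.symm

lemma rinv : ∀ x w : Q, (w * x) * iv x = w := by
  intro x w
  have := rinv' he (iv x) w
  rwa [iv_iv he] at this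

lemma rd_eq (x y : Q) : Loop.rd x y = x * iv y := by
  apply mul_rcancel (x := y)
  rw [Loop.rd_mul, rinv' he]

omit he in
lemma iv_one : iv (1 : Q) = 1 := by
  have : Loop.ld (1:Q) ((1:Q) * 1) = 1 := Loop.ld_mul 1 1
  rw [Loop.mul_one] at this
  exact this

lemma iv_mul_rev (x y : Q) : iv (x * y) = iv y * iv x := by
  have h1 : iv (x*y) * ((x*y) * iv y) = iv y := linv' he (x*y) (iv y)
  rw [rinv he] at h1
  have h2 : (iv (x*y) * x) * iv x = iv (x*y) := rinv he x _
  rw [h1] at h2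
  exact h2.symm

lemma flex (x w : Q) : x * (w * x) = (x * w) * x := by
  have := he x w 1
  rwa [Loop.one_mul, Loop.mul_one] at this

/-- the A-autotopism: (x*u)*(v*x⁻¹) = (x*(u*v))*x⁻¹ -/
lemma atpA (x u v : Q) : (x*u) * (v * iv x) = (x*(u*v)) * iv x := by
  have h1 : x * (u * ((v * iv x) * x)) = ((x*u) * (v * iv x)) * x := he x u (v * iv x)
  rw [rinv' he] at h1
  apply mul_rcancel (x := x)
  rw [rinv' he, ← h1]

/-- LCC: ((x*u)*x⁻¹)*(x*v) = x*(u*v) -/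
lemma lcc (x u v : Q) : ((x*u) * iv x) * (x*v) = x*(u*v) := by
  have e1 : (x*(u*v)) * (iv v * iv x) = (x*((u*v)*iv v)) * iv x := atpA he x (u*v) (iv v)
  rw [rinv he] at e1
  rw [← iv_mul_rev he] at e1
  rw [← e1, rinv' he]

end
end ExtraLoop
namespace ExtraLoop
variable {Q : Type*} [Loop Q]
section
variable (he : Extra Q)
include he

/-- RCC-type: (u*x)*((x⁻¹*v)*x) = (u*v)*x -/
lemma rcc (x u v : Q) : (u*x) * ((iv x * v) * x) = (u*v) * x := by
  -- move2 of atpA at (iv x)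
  have e1 : (iv x * (iv u * v)) * (u * x) = (iv x * ((iv u * v) * u)) * x := by
    have := atpA he (iv x) (iv u * v) u
    rwa [iv_iv he] at this
  -- we need a different instantiation; direct proof:
  -- B-statement: (iv x * a) * (b * x) = (iv x * (a*b)) * x
  have B : ∀ a b : Q, (iv x * a) * (b * x) = (iv x * (a*b)) * x := by
    intro a b
    have := atpA he (iv x) a b
    rwa [iv_iv he] at this
  -- now: (u*x)*((iv x*v)*x) : apply he with x:=x? use move2-style:
  -- g(uv) = iv (f (iv u)) * h v  with f = L_{iv x}, g = R_x, h t = (iv x*t)*x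
  -- i.e. (u*v)*x = iv (iv x * iv u) * ((iv x * v)*x)
  have h1 : (iv x * iv u) * ((u*v) * x) = (iv x * (iv u * (u*v))) * x := B (iv u) (u*v)
  rw [linv' he] at h1
  -- h1 : (iv x * iv u) * ((u*v)*x) = (iv x * v) * x
  have h2 : iv (iv x * iv u) * ((iv x * iv u) * ((u*v)*x)) = (u*v)*x := linv' he _ _
  rw [h1] at h2
  rw [iv_mul_rev he, iv_iv he, iv_iv he] at h2
  exact h2

/-- Moufang middle: (x*u)*(v*x) = (x*(u*v))*x -/
lemma mid (x u v : Q) : (x*u) * (v*x) = (x*(u*v)) * x := by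
  have h1 := rcc he x ((x*u) * iv x) (x*v)
  rw [rinv' he, linv' he] at h1
  rw [h1, lcc he]

/-- flex with inverse: x*(s*x⁻¹) = (x*s)*x⁻¹ -/
lemma flexinv (x s : Q) : x * (s * iv x) = (x*s) * iv x := by
  apply mul_rcancel (x := x)
  rw [rinv' he, ← flex he, rinv' he]

/-- RA + right-nucleus combined: u*((v*x)*x) = ((u*v)*x)*x -/
lemma ran (x u v : Q) : u * ((v*x)*x) = ((u*v)*x)*x := by
  have h1 : (x * (iv x * u)) * ((v*x)*x) = (x * ((iv x * u) * (v*x))) * x := mid he x (iv x * u) (v*x)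
  rw [linv he] at h1
  have h2 : (iv x * u) * (v * x) = (iv x * (u*v)) * x := by
    have := atpA he (iv x) u v
    rwa [iv_iv he] at this
  rw [h2] at h1
  rw [flex he x (iv x * (u*v)), linv he] at h1
  exact h1

lemma ra (x u : Q) : (u*x)*x = u*(x*x) := by
  have := ran he x u 1
  rw [Loop.one_mul, Loop.mul_one] at this
  exact this.symm

/-- x² is in the right nucleus -/
lemma sq_nr (x u v : Q) : u*(v*(x*x)) = (u*v)*(x*x) := by
  have h1 := ran he x u v
  rw [ra he x v, ra he x (u*v)] at h1
  exact h1

/-- LA + left-nucleus combined: (x*(x*v))*u = x*(x*(v*u)) -/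
lemma lan (x u v : Q) : (x*(x*v))*u = x*(x*(v*u)) := by
  have h1 : (x*(x*v)) * ((u * iv x) * x) = (x * ((x*v) * (u * iv x))) * x := mid he x (x*v) (u*iv x)
  rw [rinv' he] at h1
  rw [atpA he x v u] at h1
  rw [flexinv he x (x*(v*u))] at h1
  rw [rinv' he] at h1
  exact h1

lemma la (x u : Q) : x*(x*u) = (x*x)*u := by
  have := lan he x u 1
  rw [Loop.mul_one, Loop.one_mul] at this
  exact this.symm

/-- x² is in the left nucleus -/
lemma sq_nl (x u v : Q) : (x*x)*(u*v) = ((x*x)*u)*v := by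
  have h1 := lan he x v u
  rw [la he x u, la he x (u*v)] at h1
  exact h1.symm

/-- upgrade: right-nucleus element is in the full nucleus -/
lemma nr_full {a : Q} (hr : ∀ u v : Q, u*(v*a) = (u*v)*a) : a ∈ nucleus Q := by
  -- left nucleus:
  have hl : ∀ u v : Q, (a*u)*v = a*(u*v) := by
    intro u v
    have s1 : (a*u)*v = (a*u)*((v * iv a)*a) := by rw [rinv' he]
    have s2 : (a*u)*((v*iv a)*a) = ((a*u)*(v*iv a))*a := hr _ _
    have s3 : (a*u)*(v*iv a) = (a*(u*v))*iv a := atpA he a u v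
    rw [s1, s2, s3, rinv' he]
  -- middle nucleus:
  have hm : ∀ w v : Q, w*(a*v) = (w*a)*v := by
    intro w v
    -- m2: iv (a * iv u) * (a*v) = u*v with u := w*a
    have m2 : ∀ u v : Q, iv (a * iv u) * (a*v) = u*v := by
      intro u v
      apply mul_lcancel (x := a * iv u)
      rw [linv he]
      rw [hl (iv u) (u*v), linv' he]
    have := m2 (w*a) v
    rw [iv_mul_rev he, iv_iv he, rinv he] at this
    exact this
  exact ⟨fun x y => (hl x y).symm, fun x y => hm x y, fun x y => hr x y⟩
end
end ExtraLoop
namespace ExtraLoop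
variable {Q : Type*} [Loop Q]

omit [Loop Q] in
lemma nothing : True := trivial

lemma nuc_one : (1:Q) ∈ nucleus Q :=
  ⟨fun x y => by rw [Loop.one_mul, Loop.one_mul],
   fun x y => by rw [Loop.one_mul, Loop.mul_one],
   fun x y => by rw [Loop.mul_one, Loop.mul_one]⟩

lemma nuc_l {a : Q} (h : a ∈ nucleus Q) : ∀ x y : Q, a*(x*y) = (a*x)*y := h.1
lemma nuc_m {a : Q} (h : a ∈ nucleus Q) : ∀ x y : Q, x*(a*y) = (x*a)*y := h.2.1
lemma nuc_r {a : Q} (h : a ∈ nucleus Q) : ∀ x y : Q, x*(y*a) = (x*y)*a := h.2.2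

lemma nuc_mul {m n : Q} (hm : m ∈ nucleus Q) (hn : n ∈ nucleus Q) : m*n ∈ nucleus Q := by
  refine ⟨fun x y => ?_, fun x y => ?_, fun x y => ?_⟩
  · calc (m*n)*(x*y) = m*(n*(x*y)) := (nuc_m hn m (x*y)).symm
      _ = m*((n*x)*y) := by rw [nuc_l hn]
      _ = (m*(n*x))*y := by rw [nuc_l hm]
      _ = ((m*n)*x)*y := by rw [nuc_m hn]
  · calc x*((m*n)*y) = x*(m*(n*y)) := by rw [nuc_m hn m y]
      _ = (x*m)*(n*y) := by rw [nuc_m hm]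
      _ = ((x*m)*n)*y := by rw [nuc_m hn]
      _ = (x*(m*n))*y := by rw [nuc_r hn x m]
  · calc x*(y*(m*n)) = x*((y*m)*n) := by rw [nuc_r hn y m]
      _ = (x*(y*m))*n := by rw [nuc_r hn]
      _ = ((x*y)*m)*n := by rw [nuc_r hm]
      _ = (x*y)*(m*n) := (nuc_r hn (x*y) m).symm

section
variable (he : Extra Q)
include he

lemma nuc_iv {n : Q} (hn : n ∈ nucleus Q) : iv n ∈ nucleus Q := by
  have hr : ∀ u v : Q, u*(v*iv n) = (u*v)*iv n := by
    intro u v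
    have hv : (v*iv n)*n = v := rinv' he n v
    calc u*(v*iv n) = ((u*(v*iv n))*n)*iv n := by rw [rinv he]
    _ = (u*((v*iv n)*n))*iv n := by rw [nuc_r hn]
    _ = (u*v)*iv n := by rw [hv]
  exact nr_full he hr

lemma nuc_conj {n : Q} (hn : n ∈ nucleus Q) (x : Q) : (iv x * n) * x ∈ nucleus Q := by
  apply nr_full he
  intro u v
  -- composite B∘P_n∘A trick
  have key : ∀ u v : Q, u * (((v * iv x) * n) * x) = (iv x * (((x*(u*v)) * iv x) * n)) * x := by
    intro u v
    calc u * (((v * iv x) * n) * x)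
        = (iv x * (x*u)) * (((v * iv x) * n) * x) := by rw [linv' he]
      _ = (iv x * ((x*u) * ((v * iv x) * n))) * x := by
            have := atpA he (iv x) (x*u) ((v * iv x) * n)
            rwa [iv_iv he] at this
      _ = (iv x * (((x*u) * (v * iv x)) * n)) * x := by rw [nuc_r hn]
      _ = (iv x * (((x*(u*v)) * iv x) * n)) * x := by rw [atpA he x u v]
  -- g v := ((v*iv x)*n)*x satisfies u * g v = g (u*v), where g(1) = (iv x * n)*x... 
  -- from key with u := 1 we get g v = h v; so u * g v = h (u*v) = g (u*v)
  have g_eq : ∀ v : Q, ((v * iv x) * n) * x = (iv x * (((x*v) * iv x) * n)) * x := by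
    intro v
    have := key 1 v
    rwa [Loop.one_mul, Loop.one_mul] at this
  have key2 : ∀ u v : Q, u * (((v * iv x) * n) * x) = (((u*v) * iv x) * n) * x := by
    intro u v
    rw [key, ← g_eq]
  -- now with v := 1 : u * ((iv x * n)*x) = ((u*iv x)*n)*x -- i.e. g(u) = u * c
  have gc : ∀ u : Q, ((u * iv x) * n) * x = u * ((iv x * n) * x) := by
    intro u
    have := key2 u 1
    rw [Loop.mul_one] at this
    rw [← this, Loop.one_mul]
  calc u * (v * ((iv x * n) * x)) = u * (((v * iv x) * n) * x) := by rw [gc v]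
    _ = (((u*v) * iv x) * n) * x := key2 u v
    _ = (u*v) * ((iv x * n) * x) := gc (u*v)

end
end ExtraLoop
namespace ExtraLoop
variable {Q : Type*} [Loop Q]

/-- conjugation map -/
def Tc (x n : Q) : Q := (iv x * n) * x

/-- associator -/
def dd (x y z : Q) : Q := iv (x*(y*z)) * ((x*y)*z)

section
variable (he : Extra Q)
include he

lemma eq_iv_of_mul {a b : Q} (h : a * b = 1) : a = iv b := by
  have : (a*b) * iv b = a := rinv he b a
  rw [h, Loop.one_mul] at this
  exact this.symm

lemma Tc_mem {n : Q} (hn : n ∈ nucleus Q) (x : Q) : Tc x n ∈ nucleus Q := nuc_conj he hn x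

lemma T_apply (x n : Q) : x * Tc x n = n * x := by
  rw [Tc, flex he, linv he]

lemma mulT (x n : Q) : n * x = x * Tc x n := (T_apply he x n).symm

lemma T_comp {n : Q} (hn : n ∈ nucleus Q) (v w : Q) : Tc (v*w) n = Tc w (Tc v n) := by
  apply mul_lcancel (x := v*w)
  rw [T_apply he]
  have hk : Tc w (Tc v n) ∈ nucleus Q := Tc_mem he (Tc_mem he hn v) w
  calc n*(v*w) = (n*v)*w := nuc_l hn v w
    _ = (v * Tc v n)*w := by rw [mulT he v n]
    _ = v*(Tc v n * w) := (nuc_m (Tc_mem he hn v) v w).symm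
    _ = v*(w * Tc w (Tc v n)) := by rw [mulT he w (Tc v n)]
    _ = (v*w) * Tc w (Tc v n) := nuc_r hk v w

lemma T_hom {m n : Q} (hm : m ∈ nucleus Q) (hn : n ∈ nucleus Q) (w : Q) :
    Tc w (m*n) = Tc w m * Tc w n := by
  apply mul_lcancel (x := w)
  rw [T_apply he]
  calc (m*n)*w = m*(n*w) := (nuc_l hm n w).symm
    _ = m*(w*Tc w n) := by rw [mulT he w n]
    _ = (m*w)*Tc w n := nuc_l hm w _
    _ = (w*Tc w m)*Tc w n := by rw [mulT he w m]
    _ = w*(Tc w m * Tc w n) := (nuc_r (Tc_mem he hn w) w _).symm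

lemma T_one (w : Q) : Tc w 1 = 1 := by
  rw [Tc, Loop.mul_one, iv_mul he]

omit he in
lemma T_id (n : Q) : Tc 1 n = n := by
  rw [Tc, iv_one, Loop.one_mul, Loop.mul_one]

lemma T_iv {n : Q} (hn : n ∈ nucleus Q) (w : Q) : Tc w (iv n) = iv (Tc w n) := by
  apply eq_iv_of_mul he
  rw [← T_hom he (nuc_iv he hn) hn, iv_mul he, T_one he]

lemma T_inj {a b : Q} (ha : a ∈ nucleus Q) (hb : b ∈ nucleus Q) (w : Q)
    (h : Tc w a = Tc w b) : a = b := by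
  have h2 : Tc (w * iv w) a = Tc (w * iv w) b := by
    rw [T_comp he ha, T_comp he hb, h]
  rwa [mul_iv, T_id, T_id] at h2

lemma dd_mul (x y z : Q) : (x*(y*z)) * dd x y z = (x*y)*z := linv he _ _

lemma dd_eq_one_iff (x y z : Q) : dd x y z = 1 ↔ x*(y*z) = (x*y)*z := by
  constructor
  · intro h
    have := dd_mul he x y z
    rwa [h, Loop.mul_one] at this
  · intro h
    rw [dd, ← h, iv_mul he]

lemma dd_third {n : Q} (hn : n ∈ nucleus Q) (x y : Q) : dd x y n = 1 := by
  rw [dd_eq_one_iff he]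
  exact nuc_r hn x y

lemma dd_second {n : Q} (hn : n ∈ nucleus Q) (x z : Q) : dd x n z = 1 := by
  rw [dd_eq_one_iff he]
  exact nuc_m hn x z

lemma dd_first {n : Q} (hn : n ∈ nucleus Q) (y z : Q) : dd n y z = 1 := by
  rw [dd_eq_one_iff he]
  exact nuc_l hn y z

end
end ExtraLoop
namespace ExtraLoop
variable {Q : Type*} [Loop Q]

/-- coset relation mod nucleus -/
def nrel (u v : Q) : Prop := iv u * v ∈ nucleus Q

section
variable (he : Extra Q)
include he

lemma sq_mem (x : Q) : x*x ∈ nucleus Q := nr_full he (fun u v => sq_nr he x u v)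

lemma nrel_refl (u : Q) : nrel u u := by
  rw [nrel, iv_mul he]; exact nuc_one

lemma nrel_symm {u v : Q} (h : nrel u v) : nrel v u := by
  have := nuc_iv he h
  rwa [iv_mul_rev he, iv_iv he] at this

lemma nrel_trans {u v w : Q} (h1 : nrel u v) (h2 : nrel v w) : nrel u w := by
  have key : (iv u * v) * (iv v * w) = iv u * w := by
    rw [nuc_l h1 (iv v) w, rinv he]
  rw [nrel, ← key]
  exact nuc_mul h1 h2

lemma unrel {u v : Q} (h : nrel u v) : v = u * (iv u * v) := (linv he u v).symm

lemma nrel_mul {u u₁ v v₁ : Q} (h1 : nrel u u₁) (h2 : nrel v v₁) : nrel (u*v) (u₁*v₁) := by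
  set n := iv u * u₁ with hn
  set m := iv v * v₁ with hm
  have e1 : u₁ * v₁ = (u*v) * (Tc v n * m) := by
    calc u₁ * v₁ = (u*n)*(v*m) := by rw [← unrel he h1, ← unrel he h2]
      _ = ((u*n)*v)*m := nuc_r h2 (u*n) v
      _ = (u*(n*v))*m := by rw [nuc_m h1 u v]
      _ = (u*(v*Tc v n))*m := by rw [mulT he v n]
      _ = ((u*v)*Tc v n)*m := by rw [nuc_r (Tc_mem he h1 v) u v]
      _ = (u*v)*(Tc v n * m) := (nuc_m (Tc_mem he h1 v) (u*v) m).symm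
  rw [nrel, e1, linv' he]
  exact nuc_mul (Tc_mem he h1 v) h2

lemma nrel_nmul_left {n : Q} (hn : n ∈ nucleus Q) (y : Q) : nrel (n*y) y := by
  rw [nrel, iv_mul_rev he]
  exact Tc_mem he (nuc_iv he hn) y

lemma nrel_iv (s : Q) : nrel (iv s) s := by
  rw [nrel, iv_iv he]
  exact sq_mem he s

lemma nrel_comm (x y : Q) : nrel (x*y) (y*x) := by
  have h1 : nrel (x*y) (iv (x*y)) := nrel_symm he (nrel_iv he (x*y))
  rw [iv_mul_rev he] at h1
  exact nrel_trans he h1 (nrel_mul he (nrel_iv he y) (nrel_iv he x))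

/-- left Moufang -/
lemma lm (x y z : Q) : x*(y*(x*z)) = ((x*y)*x)*z := by
  calc x*(y*(x*z)) = ((x*y)*iv x)*(x*(x*z)) := (lcc he x y (x*z)).symm
    _ = ((x*y)*iv x)*((x*x)*z) := by rw [la he]
    _ = (((x*y)*iv x)*(x*x))*z := nuc_m (sq_mem he x) _ z
    _ = ((x*y)*(iv x*(x*x)))*z := by rw [nuc_r (sq_mem he x) (x*y) (iv x)]
    _ = ((x*y)*x)*z := by rw [linv' he]

lemma step_a (x y : Q) : nrel ((x*y)*x) y := by
  have h1 : nrel (x*(y*x)) (x*(x*y)) := nrel_mul he (nrel_refl he x) (nrel_comm he y x)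
  rw [flex he, la he] at h1
  exact nrel_trans he h1 (nrel_nmul_left he (sq_mem he x) y)

lemma step_b (x y z : Q) : nrel (x*(y*(x*z))) (y*z) := by
  rw [lm he]
  exact nrel_mul he (step_a he x y) (nrel_refl he z)

lemma step_c (x y w : Q) : nrel (x*(y*w)) (y*(x*w)) := by
  have h1 : nrel (x*(y*(x*(x*w)))) (y*(x*w)) := step_b he x y (x*w)
  have h2 : nrel (x*(y*(x*(x*w)))) (x*(y*w)) := by
    have h3 : nrel ((x*x)*w) w := nrel_nmul_left he (sq_mem he x) w
    have h4 : nrel (x*(y*((x*x)*w))) (x*(y*w)) :=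
      nrel_mul he (nrel_refl he x) (nrel_mul he (nrel_refl he y) h3)
    rwa [← la he] at h4
  exact nrel_trans he (nrel_symm he h2) h1

lemma nrel_assoc (x y z : Q) : nrel ((x*y)*z) (x*(y*z)) := by
  have h1 : nrel ((x*y)*z) (z*(x*y)) := nrel_comm he (x*y) z
  have h2 : nrel (z*(x*y)) (x*(z*y)) := step_c he z x y
  have h3 : nrel (x*(z*y)) (x*(y*z)) := nrel_mul he (nrel_refl he x) (nrel_comm he z y)
  exact nrel_trans he (nrel_trans he h1 h2) h3

lemma dd_mem (x y z : Q) : dd x y z ∈ nucleus Q :=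
  nrel_symm he (nrel_assoc he x y z)

end
end ExtraLoop
namespace ExtraLoop
variable {Q : Type*} [Loop Q]
section
variable (he : Extra Q)
include he

lemma iv_eq_of_mul {a b : Q} (h : a * b = 1) : b = iv a := by
  apply mul_lcancel (x := a)
  rw [h, mul_iv]

lemma lcc' (x u v : Q) : ((iv x * u) * x) * (iv x * v) = iv x * (u*v) := by
  have := lcc he (iv x) u v
  rwa [iv_iv he] at this

lemma rcc' (x u v : Q) : (u * iv x) * ((x * v) * iv x) = (u*v) * iv x := by
  have := rcc he (iv x) u v
  rwa [iv_iv he] at this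

/-- the inner map E(w) = y⁻¹(x⁻¹((xy)w)) equals w · a(x,y,w) -/
lemma E_form (x y w : Q) :
    iv y * (iv x * ((x*y)*w)) = w * dd x y w := by
  have h1 : (x*y)*w = (x*(y*w)) * dd x y w := (dd_mul he x y w).symm
  calc iv y * (iv x * ((x*y)*w))
      = iv y * (iv x * ((x*(y*w)) * dd x y w)) := by rw [← h1]
    _ = iv y * ((iv x * (x*(y*w))) * dd x y w) := by rw [nuc_r (dd_mem he x y w)]
    _ = iv y * ((y*w) * dd x y w) := by rw [linv' he]
    _ = (iv y * (y*w)) * dd x y w := by rw [nuc_r (dd_mem he x y w)]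
    _ = w * dd x y w := by rw [linv' he]

/-- E is an automorphism -/
lemma E_aut (x y u v : Q) :
    (iv y * (iv x * ((x*y)*u))) * (iv y * (iv x * ((x*y)*v)))
      = iv y * (iv x * ((x*y)*(u*v))) := by
  have key : ∀ u v : Q,
      iv y * (iv x * ((x*y)*(u*v)))
        = ((iv y * ((iv x * (((x*y)*u) * iv (x*y))) * x)) * y) * (iv y * (iv x * ((x*y)*v))) := by
    intro u v
    calc iv y * (iv x * ((x*y)*(u*v)))
        = iv y * (iv x * ((((x*y)*u) * iv (x*y)) * ((x*y)*v))) := by rw [lcc he (x*y) u v]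
      _ = iv y * (((iv x * (((x*y)*u) * iv (x*y))) * x) * (iv x * ((x*y)*v))) := by
            rw [lcc' he x (((x*y)*u) * iv (x*y)) ((x*y)*v)]
      _ = ((iv y * ((iv x * (((x*y)*u) * iv (x*y))) * x)) * y) * (iv y * (iv x * ((x*y)*v))) := by
            rw [lcc' he y ((iv x * (((x*y)*u) * iv (x*y))) * x) (iv x * ((x*y)*v))]
  have G_eq : ∀ u : Q,
      (iv y * ((iv x * (((x*y)*u) * iv (x*y))) * x)) * y = iv y * (iv x * ((x*y)*u)) := by
    intro u
    have h2 := key u 1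
    rw [Loop.mul_one, Loop.mul_one, linv' he, iv_mul he, Loop.mul_one] at h2
    exact h2.symm
  rw [← G_eq u]
  exact (key u v).symm

/-- square-shift: (w·m)² = w²·(T_w(m)·m) for m ∈ N -/
lemma sq_shift {m : Q} (hm : m ∈ nucleus Q) (w : Q) :
    (w*m)*(w*m) = (w*w)*(Tc w m * m) := by
  calc (w*m)*(w*m) = ((w*m)*w)*m := nuc_r hm (w*m) w
    _ = (w*(m*w))*m := by rw [nuc_m hm w w]
    _ = (w*(w*Tc w m))*m := by rw [mulT he w m]
    _ = ((w*w)*Tc w m)*m := by rw [nuc_r (Tc_mem he hm w) w w]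
    _ = (w*w)*(Tc w m * m) := (nuc_m (Tc_mem he hm w) (w*w) m).symm

/-- Ξ0 : T_w(a(x,y,w)) = a(x,y,w)⁻¹ -/
lemma xi0 (x y w : Q) : Tc w (dd x y w) = iv (dd x y w) := by
  have h1 := E_aut he x y w w
  rw [E_form he x y w, E_form he x y (w*w)] at h1
  rw [dd_third he (sq_mem he w) x y, Loop.mul_one] at h1
  rw [sq_shift he (dd_mem he x y w) w] at h1
  have h2 : (w*w) * (Tc w (dd x y w) * dd x y w) = (w*w) * 1 := by
    rw [h1, Loop.mul_one]
  have h3 := mul_lcancel h2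
  exact (eq_iv_of_mul he h3)

/-- conjugation rule in the third slot -/
lemma dd_conj3 {ν : Q} (hν : ν ∈ nucleus Q) (x y z : Q) :
    dd x y (z*ν) = (iv ν * dd x y z) * ν := by
  have e1 : x*(y*(z*ν)) = (x*(y*z))*ν := by
    rw [nuc_r hν y z, nuc_r hν x (y*z)]
  have e2 : (x*y)*(z*ν) = ((x*y)*z)*ν := nuc_r hν (x*y) z
  rw [dd, e1, e2, iv_mul_rev he]
  calc (iv ν * iv (x*(y*z))) * (((x*y)*z)*ν)
      = iv ν * (iv (x*(y*z)) * (((x*y)*z)*ν)) := (nuc_l (nuc_iv he hν) _ _).symm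
    _ = iv ν * ((iv (x*(y*z)) * ((x*y)*z))*ν) := by rw [nuc_r hν (iv (x*(y*z))) ((x*y)*z)]
    _ = (iv ν * (iv (x*(y*z)) * ((x*y)*z))) * ν := nuc_r hν _ _
    _ = (iv ν * dd x y z) * ν := rfl

/-- associators commute with the nucleus -/
lemma dd_comm_nuc (x y z : Q) {m : Q} (hm : m ∈ nucleus Q) :
    m * dd x y z = dd x y z * m := by
  set δ := dd x y z with hδ
  have hδm : δ ∈ nucleus Q := dd_mem he x y z
  -- first: iv δ commutes with Tc z ν for all ν ∈ N
  have step : ∀ ν : Q, ν ∈ nucleus Q → (iv (Tc z ν) * iv δ) * Tc z ν = iv δ := by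
    intro ν hν
    have h1 := xi0 he x y (z*ν)
    rw [dd_conj3 he hν x y z] at h1
    set c := (iv ν * δ) * ν with hc
    have hcN : c ∈ nucleus Q := nuc_mul (nuc_mul (nuc_iv he hν) hδm) hν
    rw [T_comp he hcN z ν] at h1
    -- compute Tc z c
    have h2 : Tc z c = (iv (Tc z ν) * iv δ) * Tc z ν := by
      rw [hc, T_hom he (nuc_mul (nuc_iv he hν) hδm) hν z,
          T_hom he (nuc_iv he hν) hδm z, T_iv he hν z, xi0 he x y z]
    -- compute iv c
    have h3 : iv c = (iv ν * iv δ) * ν := by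
      rw [hc, iv_mul_rev he, iv_mul_rev he, iv_iv he]
      exact nuc_l (nuc_iv he hν) (iv δ) ν
    rw [h2, h3] at h1
    -- h1 : Tc ν ((iv (Tc z ν) * iv δ) * Tc z ν) = (iv ν * iv δ) * ν
    rw [Tc] at h1
    -- h1 : (iv ν * ((iv (Tc z ν) * iv δ) * Tc z ν)) * ν = (iv ν * iv δ) * ν
    have h4 := mul_rcancel h1
    have h5 := mul_lcancel h4
    exact h5
  -- surjectivity of Tc z на N
  have h6 : (iv m * iv δ) * m = iv δ := by
    have hsur : Tc z (Tc (iv z) m) = m := by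
      rw [← T_comp he hm (iv z) z, iv_mul he, T_id]
    have := step (Tc (iv z) m) (Tc_mem he hm (iv z))
    rwa [hsur] at this
  -- conclude : iv δ * m = m * iv δ
  have h7 : iv δ * m = m * iv δ := by
    have := congrArg (fun t => m * t) h6
    calc iv δ * m = ((m * iv m) * iv δ) * m := by rw [mul_iv, Loop.one_mul]
      _ = (m * (iv m * iv δ)) * m := by rw [nuc_l hm (iv m) (iv δ)]
      _ = m * ((iv m * iv δ) * m) := (nuc_l hm _ m).symm
      _ = m * iv δ := by rw [h6]
  -- transfer to δ
  have h8 := congrArg iv h7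
  rw [iv_mul_rev he, iv_mul_rev he, iv_iv he] at h8
  have h9 : ∀ k : Q, k ∈ nucleus Q → iv k * δ = δ * iv k := by
    intro k hk
    have h6k : (iv k * iv δ) * k = iv δ := by
      have hsur : Tc z (Tc (iv z) k) = k := by
        rw [← T_comp he hk (iv z) z, iv_mul he, T_id]
      have := step (Tc (iv z) k) (Tc_mem he hk (iv z))
      rwa [hsur] at this
    have h7k : iv δ * k = k * iv δ := by
      calc iv δ * k = ((k * iv k) * iv δ) * k := by rw [mul_iv, Loop.one_mul]
        _ = (k * (iv k * iv δ)) * k := by rw [nuc_l hk (iv k) (iv δ)]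
        _ = k * ((iv k * iv δ) * k) := (nuc_l hk _ k).symm
        _ = k * iv δ := by rw [h6k]
    have := congrArg iv h7k
    rwa [iv_mul_rev he, iv_mul_rev he, iv_iv he] at this
  have := h9 (iv m) (nuc_iv he hm)
  rwa [iv_iv he] at this

end
end ExtraLoop
namespace ExtraLoop
variable {Q : Type*} [Loop Q]
section
variable (he : Extra Q)
include he

/-- S6 : a(x, yz, z) = a(x,y,z) -/
lemma dd_S6 (x y z : Q) : dd x (y*z) z = dd x y z := by
  set δ := dd x y z with hδ
  have hδN : δ ∈ nucleus Q := dd_mem he x y z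
  have h1 : (x*(y*z))*z = ((x*((y*z)*z)) * dd x (y*z) z) := (dd_mul he x (y*z) z).symm
  have h2 : x*((y*z)*z) = ((x*y)*z)*z := by
    rw [ra he z y, nuc_r (sq_mem he z) x y, ← ra he z (x*y)]
  have h3 : ((x*y)*z)*z = ((x*(y*z))*z) * Tc z δ := by
    calc ((x*y)*z)*z = ((x*(y*z))*δ)*z := by rw [dd_mul he x y z]
      _ = (x*(y*z))*(δ*z) := (nuc_m hδN _ z).symm
      _ = (x*(y*z))*(z*Tc z δ) := by rw [mulT he z δ]
      _ = ((x*(y*z))*z)*Tc z δ := nuc_r (Tc_mem he hδN z) _ z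
  rw [h2, h3] at h1
  have h4 : ((x*(y*z))*z) * 1 = ((x*(y*z))*z) * (Tc z δ * dd x (y*z) z) := by
    rw [Loop.mul_one, nuc_m (Tc_mem he hδN z) ((x*(y*z))*z) (dd x (y*z) z)]
    exact h1
  have h5 := mul_lcancel h4
  have h6 : dd x (y*z) z = iv (Tc z δ) := iv_eq_of_mul he h5.symm
  rw [h6, xi0 he x y z, iv_iv he]

/-- conjugation identity: x⁻¹((xt)z) = (t(zx))x⁻¹ -/
lemma conjid (x t z : Q) : iv x * ((x*t)*z) = (t*(z*x)) * iv x := by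
  have h1 : (x*t)*z = (x*(t*(z*x)))*iv x := by
    have h2 := he x t z
    rw [h2, rinv he]
  rw [h1]
  have h3 : iv x * ((x*(t*(z*x)))*iv x) = (iv x * (x*(t*(z*x))))*iv x :=
    flex he (iv x) (x*(t*(z*x)))
  rw [h3, linv' he]

/-- H-form: ((t(zx))x⁻¹)z⁻¹ = t · T_{z⁻¹}(a(x,t,z)) -/
lemma H_form (x t z : Q) :
    ((t*(z*x)) * iv x) * iv z = t * Tc (iv z) (dd x t z) := by
  rw [← conjid he x t z]
  have hδ : dd x t z ∈ nucleus Q := dd_mem he x t z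
  calc (iv x * ((x*t)*z)) * iv z
      = (iv x * ((x*(t*z)) * dd x t z)) * iv z := by rw [dd_mul he x t z]
    _ = ((iv x * (x*(t*z))) * dd x t z) * iv z := by rw [nuc_r hδ]
    _ = ((t*z) * dd x t z) * iv z := by rw [linv' he]
    _ = (t*z) * (dd x t z * iv z) := (nuc_m hδ _ _).symm
    _ = (t*z) * (iv z * Tc (iv z) (dd x t z)) := by rw [mulT he (iv z) (dd x t z)]
    _ = ((t*z) * iv z) * Tc (iv z) (dd x t z) := nuc_r (Tc_mem he hδ (iv z)) _ _
    _ = t * Tc (iv z) (dd x t z) := by rw [rinv he]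

/-- mirror automorphism -/
lemma Eb_aut (x z u v : Q) :
    (((u*(z*x)) * iv x) * iv z) * (((v*(z*x)) * iv x) * iv z)
      = (((u*v)*(z*x)) * iv x) * iv z := by
  have key : ∀ u v : Q,
      (((u*v)*(z*x)) * iv x) * iv z
        = (((u*(z*x)) * iv x) * iv z) * ((z*((x*((iv (z*x) * v)*(z*x))) * iv x)) * iv z) := by
    intro u v
    calc (((u*v)*(z*x)) * iv x) * iv z
        = (((u*(z*x)) * ((iv (z*x) * v)*(z*x))) * iv x) * iv z := by
            rw [rcc he (z*x) u v]
      _ = (((u*(z*x)) * iv x) * ((x*((iv (z*x) * v)*(z*x))) * iv x)) * iv z := by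
            rw [rcc' he x (u*(z*x)) ((iv (z*x) * v)*(z*x))]
      _ = (((u*(z*x)) * iv x) * iv z) * ((z*((x*((iv (z*x) * v)*(z*x))) * iv x)) * iv z) := by
            rw [rcc' he z ((u*(z*x)) * iv x) ((x*((iv (z*x) * v)*(z*x))) * iv x)]
  have G_eq : ∀ v : Q,
      (z*((x*((iv (z*x) * v)*(z*x))) * iv x)) * iv z = ((v*(z*x)) * iv x) * iv z := by
    intro v
    have h2 := key 1 v
    rw [Loop.one_mul, Loop.one_mul, rinv he x z] at h2
    rw [mul_iv, Loop.one_mul] at h2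
    exact h2.symm
  rw [← G_eq v]
  exact (key u v).symm

/-- Ξ2 : T_{(z⁻¹w)z}(a(x,w,z)) = a(x,w,z)⁻¹ -/
lemma xi2 (x w z : Q) : Tc ((iv z * w)*z) (dd x w z) = iv (dd x w z) := by
  have hδ : dd x w z ∈ nucleus Q := dd_mem he x w z
  have h1 := Eb_aut he x z w w
  rw [H_form he x w z, H_form he x (w*w) z] at h1
  rw [dd_second he (sq_mem he w) x z, T_one he, Loop.mul_one] at h1
  rw [sq_shift he (Tc_mem he hδ (iv z)) w] at h1
  have h2 : (w*w) * (Tc w (Tc (iv z) (dd x w z)) * Tc (iv z) (dd x w z)) = (w*w) * 1 := by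
    rw [h1, Loop.mul_one]
  have h3 := mul_lcancel h2
  have h4 : Tc w (Tc (iv z) (dd x w z)) = iv (Tc (iv z) (dd x w z)) := eq_iv_of_mul he h3
  -- apply Tc z and use T_comp
  have h5 : Tc z (Tc w (Tc (iv z) (dd x w z))) = Tc z (Tc (iv z) (iv (dd x w z))) := by
    rw [h4, T_iv he hδ (iv z)]
  rw [← T_comp he hδ (iv z) w, ← T_comp he hδ (iv z * w) z] at h5
  rw [← T_comp he (nuc_iv he hδ) (iv z) z, iv_mul he, T_id] at h5
  exact h5

/-- The associator has order 2 -/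
theorem dd_sq (x y z : Q) : dd x y z * dd x y z = 1 := by
  set δ := dd x y z with hδdef
  have hδN : δ ∈ nucleus Q := dd_mem he x y z
  have h1 : Tc z δ = iv δ := xi0 he x y z
  -- fixer
  have h2 : Tc ((iv z * (y*z))*z) δ = iv δ := by
    have := xi2 he x (y*z) z
    rwa [dd_S6 he x y z] at this
  have h3 : Tc (iv z) (Tc ((iv z * (y*z))*z) δ) = Tc (iv z) (Tc z δ) := by rw [h1, h2]
  rw [← T_comp he hδN z (iv z), mul_iv, T_id] at h3
  rw [← T_comp he hδN ((iv z*(y*z))*z) (iv z)] at h3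
  rw [rinv he z (iv z * (y*z))] at h3
  -- h3 : Tc (iv z * (y*z)) δ = δ
  -- anti-fixer in the same coset
  have h4 : Tc ((iv z * y)*z) δ = iv δ := xi2 he x y z
  have h5 : (iv z * y)*z = (iv z * (y*z)) * dd (iv z) y z := (dd_mul he (iv z) y z).symm
  have hn : dd (iv z) y z ∈ nucleus Q := dd_mem he (iv z) y z
  rw [h5, T_comp he hδN (iv z * (y*z)) (dd (iv z) y z), h3] at h4
  -- h4 : Tc (dd (iv z) y z) δ = iv δ
  rw [Tc] at h4
  have h6 : (iv (dd (iv z) y z) * δ) * dd (iv z) y z = iv δ := h4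
  set n := dd (iv z) y z with hndef
  have h7 : δ = iv δ := by
    calc δ = (iv n * n) * δ := by rw [iv_mul he, Loop.one_mul]
      _ = iv n * (n * δ) := (nuc_l (nuc_iv he hn) n δ).symm
      _ = iv n * (δ * n) := by rw [dd_comm_nuc he x y z hn]
      _ = (iv n * δ) * n := nuc_l (nuc_iv he hn) δ n
      _ = iv δ := h6
  nth_rewrite 2 [h7]
  exact mul_iv δ

end
end ExtraLoop
namespace ExtraLoop
variable {Q : Type*} [Loop Q]

/-- associativity of a triple -/
def Assoc (u v w : Q) : Prop := u*(v*w) = (u*v)*w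

lemma a_one1 (v w : Q) : Assoc 1 v w := by rw [Assoc, Loop.one_mul, Loop.one_mul]
lemma a_one2 (u w : Q) : Assoc u 1 w := by rw [Assoc, Loop.one_mul, Loop.mul_one]
lemma a_one3 (u v : Q) : Assoc u v 1 := by rw [Assoc, Loop.mul_one, Loop.mul_one]

section
variable (he : Extra Q)
include he

lemma a_ll (u w : Q) : Assoc u u w := la he u w

lemma a_rr (u v : Q) : Assoc u v v := (ra he v u).symm

lemma a_flex (u v : Q) : Assoc u v u := flex he u v

lemma aV1 (x y : Q) : Assoc x y (x*y) := by
  rw [Assoc]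
  calc x*(y*(x*y)) = x*((y*x)*y) := by rw [flex he y x]
    _ = ((x*(y*x))*iv x)*(x*y) := by rw [lcc he x (y*x) y]
    _ = (((x*y)*x)*iv x)*(x*y) := by rw [flex he x y]
    _ = (x*y)*(x*y) := by rw [rinv he x (x*y)]

lemma aV3 (x y : Q) : Assoc (x*y) x y := by
  rw [Assoc]
  have h1 := lm he x y y
  have h2 := aV1 he x y
  rw [Assoc] at h2
  rw [← h1, h2]

lemma aV2 (x y : Q) : Assoc x (x*y) y := by
  rw [Assoc]
  calc x*((x*y)*y) = x*(x*(y*y)) := by rw [ra he y x]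
    _ = (x*x)*(y*y) := la he x (y*y)
    _ = ((x*x)*y)*y := (ra he y (x*x)).symm
    _ = (x*(x*y))*y := by rw [la he x y]

lemma aV5 (x y : Q) : Assoc y x (x*y) := by
  rw [Assoc]
  calc y*(x*(x*y)) = y*((x*x)*y) := by rw [la he x y]
    _ = (y*(x*x))*y := nuc_m (sq_mem he x) y y
    _ = (y*x)*(x*y) := (mid he y x x).symm

lemma aV6 (x y : Q) : Assoc y (x*y) x := by
  rw [Assoc]
  calc y*((x*y)*x) = y*(x*(y*x)) := by rw [← flex he x y]
    _ = ((y*x)*y)*x := lm he y x x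
    _ = (y*(x*y))*x := by rw [flex he y x]

lemma aV4 (x y : Q) : Assoc (x*y) y x := by
  rw [Assoc]
  calc (x*y)*(y*x) = (x*(y*y))*x := mid he x y y
    _ = ((x*y)*y)*x := by rw [ra he y x]

lemma assoc_inv1 {n : Q} (hn : n ∈ nucleus Q) (u v w : Q) :
    Assoc u v w ↔ Assoc (u*n) v w := by
  have e1 : ((u*n)*v)*w = ((u*v)*w)*Tc w (Tc v n) := by
    calc ((u*n)*v)*w = (u*(n*v))*w := by rw [nuc_m hn u v]
      _ = (u*(v*Tc v n))*w := by rw [mulT he v n]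
      _ = ((u*v)*Tc v n)*w := by rw [nuc_r (Tc_mem he hn v) u v]
      _ = (u*v)*(Tc v n*w) := (nuc_m (Tc_mem he hn v) (u*v) w).symm
      _ = (u*v)*(w*Tc w (Tc v n)) := by rw [mulT he w (Tc v n)]
      _ = ((u*v)*w)*Tc w (Tc v n) := nuc_r (Tc_mem he (Tc_mem he hn v) w) (u*v) w
  have e2 : (u*n)*(v*w) = (u*(v*w))*Tc w (Tc v n) := by
    calc (u*n)*(v*w) = u*(n*(v*w)) := by rw [nuc_m hn u (v*w)]
      _ = u*((v*w)*Tc (v*w) n) := by rw [mulT he (v*w) n]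
      _ = (u*(v*w))*Tc (v*w) n := nuc_r (Tc_mem he hn (v*w)) u (v*w)
      _ = (u*(v*w))*Tc w (Tc v n) := by rw [T_comp he hn v w]
  constructor
  · intro h
    rw [Assoc] at h ⊢
    rw [e1, e2, h]
  · intro h
    rw [Assoc] at h ⊢
    rw [e1, e2] at h
    exact mul_rcancel h

lemma assoc_inv2 {n : Q} (hn : n ∈ nucleus Q) (u v w : Q) :
    Assoc u v w ↔ Assoc u (v*n) w := by
  have e1 : (u*(v*n))*w = ((u*v)*w)*Tc w n := by
    calc (u*(v*n))*w = ((u*v)*n)*w := by rw [nuc_r hn u v]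
      _ = (u*v)*(n*w) := (nuc_m hn (u*v) w).symm
      _ = (u*v)*(w*Tc w n) := by rw [mulT he w n]
      _ = ((u*v)*w)*Tc w n := nuc_r (Tc_mem he hn w) (u*v) w
  have e2 : u*((v*n)*w) = (u*(v*w))*Tc w n := by
    calc u*((v*n)*w) = u*(v*(n*w)) := by rw [nuc_m hn v w]
      _ = u*(v*(w*Tc w n)) := by rw [mulT he w n]
      _ = u*((v*w)*Tc w n) := by rw [nuc_r (Tc_mem he hn w) v w]
      _ = (u*(v*w))*Tc w n := nuc_r (Tc_mem he hn w) u (v*w)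
  constructor
  · intro h
    rw [Assoc] at h ⊢
    rw [e1, e2, h]
  · intro h
    rw [Assoc] at h ⊢
    rw [e1, e2] at h
    exact mul_rcancel h

lemma assoc_inv3 {n : Q} (hn : n ∈ nucleus Q) (u v w : Q) :
    Assoc u v w ↔ Assoc u v (w*n) := by
  have e1 : (u*v)*(w*n) = ((u*v)*w)*n := nuc_r hn (u*v) w
  have e2 : u*(v*(w*n)) = (u*(v*w))*n := by
    calc u*(v*(w*n)) = u*((v*w)*n) := by rw [nuc_r hn v w]
      _ = (u*(v*w))*n := nuc_r hn u (v*w)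
  constructor
  · intro h
    rw [Assoc] at h ⊢
    rw [e1, e2, h]
  · intro h
    rw [Assoc] at h ⊢
    rw [e1, e2] at h
    exact mul_rcancel h

end
end ExtraLoop
namespace ExtraLoop
variable {Q : Type*} [Loop Q]

/-- setoid mod nucleus -/
def qs (he : Extra Q) : Setoid Q :=
  ⟨nrel, fun u => nrel_refl he u, fun h => nrel_symm he h, fun h1 h2 => nrel_trans he h1 h2⟩

/-- the quotient -/
def QN (he : Extra Q) : Type _ := Quotient (qs he)

def qmk (he : Extra Q) (u : Q) : QN he := Quotient.mk (qs he) u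

/-- the quotient group -/
def qgroup (he : Extra Q) : Group (QN he) where
  mul := Quotient.map₂ (· * ·) (fun _ _ h1 _ _ h2 => nrel_mul he h1 h2)
  one := qmk he 1
  inv := id
  mul_assoc := by
    rintro ⟨a⟩ ⟨b⟩ ⟨c⟩
    exact Quotient.sound (nrel_assoc he a b c)
  one_mul := by
    rintro ⟨a⟩
    exact Quotient.sound (by show nrel (1*a) a; rw [Loop.one_mul]; exact nrel_refl he a)
  mul_one := by
    rintro ⟨a⟩
    exact Quotient.sound (by show nrel (a*1) a; rw [Loop.mul_one]; exact nrel_refl he a)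
  inv_mul_cancel := by
    rintro ⟨a⟩
    refine Quotient.sound ?_
    show nrel (a*a) 1
    rw [nrel, Loop.mul_one]
    exact nuc_iv he (sq_mem he a)

lemma qmk_mul (he : Extra Q) (u v : Q) :
    (qgroup he).mul (qmk he u) (qmk he v) = qmk he (u*v) := rfl

/-- the nucleus group -/
def ngroup (he : Extra Q) : Group {x // x ∈ nucleus Q} where
  mul a b := ⟨a.1 * b.1, nuc_mul a.2 b.2⟩
  one := ⟨1, nuc_one⟩
  inv a := ⟨iv a.1, nuc_iv he a.2⟩
  mul_assoc a b c := Subtype.ext ((nuc_l a.2 b.1 c.1).symm)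
  one_mul a := Subtype.ext (Loop.one_mul a.1)
  mul_one a := Subtype.ext (Loop.mul_one a.1)
  inv_mul_cancel a := Subtype.ext (iv_mul he a.1)

/-- counting equivalence -/
noncomputable def qEquiv (he : Extra Q) : QN he × {x // x ∈ nucleus Q} ≃ Q where
  toFun p := p.1.out * p.2.1
  invFun u := ⟨qmk he u, ⟨iv ((qmk he u).out) * u, by
    have h1 : qmk he ((qmk he u).out) = qmk he u := Quotient.out_eq _
    have h2 : nrel ((qmk he u).out) u := Quotient.exact h1
    exact h2⟩⟩
  left_inv := by
    rintro ⟨q, n, hn⟩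
    have h1 : qmk he (q.out * n) = q := by
      have h2 : nrel q.out (q.out * n) := by
        rw [nrel, linv' he]; exact hn
      have h3 : qmk he q.out = qmk he (q.out * n) := Quotient.sound h2
      rw [← h3]
      exact Quotient.out_eq q
    refine Prod.ext ?_ ?_
    · exact h1
    · apply Subtype.ext
      show iv ((qmk he (q.out * n)).out) * (q.out * n) = n
      rw [h1, linv' he]
  right_inv u := linv he _ u

end ExtraLoop
open ExtraLoop in
theorem stmt_10' {Q : Type*} [Loop Q] [Finite Q]
    (hextra : ∀ x y z : Q, x * (y * (z * x)) = ((x * y) * z) * x)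
    (hna : ∃ x y z : Q, x * (y * z) ≠ (x * y) * z) :
    16 ∣ Nat.card Q := by
  classical
  have he : Extra Q := hextra
  obtain ⟨x₀, y₀, z₀, hne⟩ := hna
  -- nucleus group and its even cardinality
  letI nG : Group {x // x ∈ nucleus Q} := ngroup he
  have hδN := dd_mem he x₀ y₀ z₀
  have hδ1 : dd x₀ y₀ z₀ ≠ 1 := fun h => hne ((dd_eq_one_iff he _ _ _).mp h)
  set g : {x // x ∈ nucleus Q} := ⟨dd x₀ y₀ z₀, hδN⟩ with hgdef
  have hg1 : g ≠ 1 := by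
    intro h
    exact hδ1 (congrArg Subtype.val h)
  have hg2 : g ^ 2 = 1 := by
    rw [pow_two]
    exact Subtype.ext (dd_sq he x₀ y₀ z₀)
  haveI : Fact (Nat.Prime 2) := ⟨Nat.prime_two⟩
  have hord : orderOf g = 2 := orderOf_eq_prime hg2 hg1
  have h2N : 2 ∣ Nat.card {x // x ∈ nucleus Q} := hord ▸ orderOf_dvd_natCard g
  -- quotient group
  letI qG : Group (QN he) := qgroup he
  haveI hfin : Finite (QN he) := by
    show Finite (Quotient (qs he))
    exact Quotient.finite _
  have hmulmk : ∀ u v : Q, qmk he u * qmk he v = qmk he (u*v) := fun u v => rfl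
  have hexp : ∀ U : QN he, U * U = 1 := by
    intro U
    obtain ⟨a⟩ := U
    show qmk he a * qmk he a = qmk he 1
    rw [hmulmk]
    refine Quotient.sound ?_
    show nrel (a*a) 1
    rw [nrel, Loop.mul_one]
    exact nuc_iv he (sq_mem he a)
  have hpg : IsPGroup 2 (QN he) := by
    intro U
    exact ⟨1, by rw [show (2:ℕ)^1 = 2 from rfl, pow_two]; exact hexp U⟩
  obtain ⟨k, hk⟩ := hpg.exists_card_eq
  -- counting
  have hcount : Nat.card Q = Nat.card (QN he) * Nat.card {x // x ∈ nucleus Q} := by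
    have h := Nat.card_congr (qEquiv he)
    rw [Nat.card_prod] at h
    exact h.symm
  -- 8 divides the quotient cardinality
  have h8 : 8 ∣ Nat.card (QN he) := by
    by_contra h8n
    have hk3 : k < 3 := by
      by_contra hk3n
      push_neg at hk3n
      exact h8n (hk ▸ (pow_dvd_pow 2 hk3n : (2:ℕ)^3 ∣ 2^k))
    have hcard4 : Nat.card (QN he) ≤ 4 := by
      rw [hk]
      calc (2:ℕ)^k ≤ 2^2 := Nat.pow_le_pow_right (by norm_num) (by omega)
        _ = 4 := by norm_num
    -- covering by four cosets
    have cov : ∃ a b : Q, ∀ u : Q,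
        qmk he u = qmk he 1 ∨ qmk he u = qmk he a ∨ qmk he u = qmk he b ∨
          qmk he u = qmk he (a*b) := by
      by_cases hA : ∀ U : QN he, U = qmk he 1
      · exact ⟨1, 1, fun u => Or.inl (hA _)⟩
      · push_neg at hA
        obtain ⟨A, hA1⟩ := hA
        obtain ⟨a, ha⟩ := Quotient.exists_rep A
        have da1 : qmk he a ≠ qmk he 1 := by rw [← ha] at hA1; exact hA1
        by_cases hB : ∀ U : QN he, U = qmk he 1 ∨ U = qmk he a
        · refine ⟨a, a, fun u => ?_⟩
          rcases hB (qmk he u) with h | h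
          · exact Or.inl h
          · exact Or.inr (Or.inl h)
        · push_neg at hB
          obtain ⟨B, hB1, hB2⟩ := hB
          obtain ⟨b, hb⟩ := Quotient.exists_rep B
          have db1 : qmk he b ≠ qmk he 1 := by rw [← hb] at hB1; exact hB1
          have dba : qmk he b ≠ qmk he a := by rw [← hb] at hB2; exact hB2
          refine ⟨a, b, fun u => ?_⟩
          by_contra hu
          push_neg at hu
          obtain ⟨hu1, hu2, hu3, hu4⟩ := hu
          -- (a*b)-class distinct from the others
          have dab1 : qmk he (a*b) ≠ qmk he 1 := by
            intro h
            have h2 : qmk he a * qmk he b = 1 := by rw [hmulmk]; exact h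
            have h3 : qmk he b = (qmk he a)⁻¹ := eq_inv_of_mul_eq_one_right h2
            have h4 : (qmk he a)⁻¹ = qmk he a := rfl
            rw [h4] at h3
            exact dba h3
          have dab2 : qmk he (a*b) ≠ qmk he a := by
            intro h
            have h2 : qmk he a * qmk he b = qmk he a * 1 := by
              rw [hmulmk, _root_.mul_one]; exact h
            have h3 := mul_left_cancel h2
            exact db1 h3
          have dab3 : qmk he (a*b) ≠ qmk he b := by
            intro h
            have h2 : qmk he a * qmk he b = 1 * qmk he b := by
              rw [hmulmk, _root_.one_mul]; exact h
            have h3 := mul_right_cancel h2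
            exact da1 h3
          letI : Fintype (QN he) := Fintype.ofFinite _
          have hcard5 :
              ({qmk he u, qmk he (a*b), qmk he b, qmk he a, qmk he 1} : Finset (QN he)).card
                = 5 := by
            rw [Finset.card_insert_of_notMem (by simp [hu4, hu3, hu2, hu1]),
                Finset.card_insert_of_notMem (by simp [dab3, dab2, dab1]),
                Finset.card_insert_of_notMem (by simp [dba, db1]),
                Finset.card_insert_of_notMem (by simp [da1]),
                Finset.card_singleton]
          have hle := Finset.card_le_univ
            ({qmk he u, qmk he (a*b), qmk he b, qmk he a, qmk he 1} : Finset (QN he))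
          rw [hcard5] at hle
          rw [Nat.card_eq_fintype_card] at hcard4
          omega
    obtain ⟨a, b, hcov⟩ := cov
    have key : ∀ r s t : Q,
        (r=1∨r=a∨r=b∨r=a*b) → (s=1∨s=a∨s=b∨s=a*b) → (t=1∨t=a∨t=b∨t=a*b) → Assoc r s t := by
      rintro r s t (rfl|rfl|rfl|rfl) (rfl|rfl|rfl|rfl) (rfl|rfl|rfl|rfl) <;>
        first
          | exact a_one1 _ _ | exact a_one2 _ _ | exact a_one3 _ _
          | exact a_ll he _ _ | exact a_rr he _ _ | exact a_flex he _ _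
          | exact aV1 he _ _ | exact aV2 he _ _ | exact aV3 he _ _
          | exact aV4 he _ _ | exact aV5 he _ _ | exact aV6 he _ _
    have dec : ∀ u : Q, ∃ r n, (r=1∨r=a∨r=b∨r=a*b) ∧ n ∈ nucleus Q ∧ u = r * n := by
      intro u
      have mk_dec : ∀ r : Q, qmk he u = qmk he r → ∃ n, n ∈ nucleus Q ∧ u = r * n := by
        intro r h
        have h2 : nrel r u := nrel_symm he (Quotient.exact h)
        exact ⟨iv r * u, h2, (linv he r u).symm⟩
      rcases hcov u with h | h | h | h
      · obtain ⟨n, hn, hu⟩ := mk_dec 1 h; exact ⟨1, n, Or.inl rfl, hn, hu⟩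
      · obtain ⟨n, hn, hu⟩ := mk_dec a h; exact ⟨a, n, Or.inr (Or.inl rfl), hn, hu⟩
      · obtain ⟨n, hn, hu⟩ := mk_dec b h; exact ⟨b, n, Or.inr (Or.inr (Or.inl rfl)), hn, hu⟩
      · obtain ⟨n, hn, hu⟩ := mk_dec (a*b) h
        exact ⟨a*b, n, Or.inr (Or.inr (Or.inr rfl)), hn, hu⟩
    have hassoc : ∀ u v w : Q, Assoc u v w := by
      intro u v w
      obtain ⟨r, n1, hr, hn1, h1⟩ := dec u
      obtain ⟨s, n2, hs, hn2, h2⟩ := dec v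
      obtain ⟨t, n3, ht, hn3, h3⟩ := dec w
      rw [h1, h2, h3]
      exact (assoc_inv1 he hn1 _ _ _).mp
        ((assoc_inv2 he hn2 _ _ _).mp ((assoc_inv3 he hn3 _ _ _).mp (key r s t hr hs ht)))
    exact hne (hassoc x₀ y₀ z₀)
  rw [hcount, show (16:ℕ) = 8 * 2 from rfl]
  exact mul_dvd_mul h8 h2N

/-- If `Q` is a finite nonassociative extra loop, then `16 ∣ |Q|`. -/
theorem stmt_10 {Q : Type*} [Loop Q] [Finite Q]
    (hextra : ∀ x y z : Q, x * (y * (z * x)) = ((x * y) * z) * x)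
    (hna : ∃ x y z : Q, x * (y * z) ≠ (x * y) * z) :
    16 ∣ Nat.card Q := by
  exact stmt_10' hextra hna
end
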